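/- arXiv:2305.17536 — 10 statements merged into one kernel-verified Lean document; each statement's English description precedes it below -/
import Mathlib

section
/- Let G and H be connected simple graphs, each having at least two vertices. If (u1,v1) and (u2,v2) are two adjacent vertices of the Cartesian product G □ H, then the closed neighborhoods of (u1,v1) and (u2,v2) in G □ H are distinct, i.e., N[(u1,v1)] ≠ N[(u2,v2)]. -/
open SimpleGraph

/-- The closed neighborhood of a vertex: the vertex together with its neighbors. -/
def SimpleGraph.closedNbhd {V : Type*} (G : SimpleGraph V) (v : V) : Set V :=
  insert v (G.neighborSet v)

/-- A coloring `f` is a locally identifying coloring of `G` if it is proper and, for every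
edge `uw` whose endpoints have distinct closed neighborhoods, the sets of colors appearing
on the two closed neighborhoods are distinct. -/
def SimpleGraph.IsLidColoring {V α : Type*} (G : SimpleGraph V) (f : V → α) : Prop :=
  (∀ ⦃u w⦄, G.Adj u w → f u ≠ f w) ∧
  (∀ ⦃u w⦄, G.Adj u w → G.closedNbhd u ≠ G.closedNbhd w →
    f '' G.closedNbhd u ≠ f '' G.closedNbhd w)

/-- `G` admits a locally identifying coloring with `k` colors. -/
def SimpleGraph.LidColorable {V : Type*} (G : SimpleGraph V) (k : ℕ) : Prop :=
  ∃ f : V → Fin k, G.IsLidColoring f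

/-- The lid-chromatic number of `G`: the least number of colors in a lid-coloring of `G`. -/
noncomputable def SimpleGraph.lidChromaticNumber {V : Type*} (G : SimpleGraph V) : ℕ∞ :=
  ⨅ k ∈ {k : ℕ | G.LidColorable k}, (k : ℕ∞)

/-- The tensor (categorical/Kronecker) product of two simple graphs. -/
def SimpleGraph.tensorProd {α β : Type*} (G : SimpleGraph α) (H : SimpleGraph β) :
    SimpleGraph (α × β) where
  Adj x y := G.Adj x.1 y.1 ∧ H.Adj x.2 y.2
  symm := ⟨fun _ _ h => ⟨h.1.symm, h.2.symm⟩⟩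
  loopless := ⟨fun x h => G.loopless.irrefl x.1 h.1⟩

lemma conn_exists_adj {α : Type*} [Nontrivial α] {G : SimpleGraph α} (hG : G.Connected) (v : α) :
    ∃ w, G.Adj v w := by
  obtain ⟨w, hw⟩ := exists_ne v
  obtain ⟨p⟩ := hG v w
  cases p with
  | nil => exact absurd rfl hw.symm
  | cons h _ => exact ⟨_, h⟩

/-- If `G` and `H` are connected graphs each with at least two vertices, then adjacent
vertices of the Cartesian (box) product `G □ H` have distinct closed neighborhoods. -/
theorem lid_stmt_0 {α β : Type*} [Nontrivial α] [Nontrivial β]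
    (G : SimpleGraph α) (H : SimpleGraph β) (hG : G.Connected) (hH : H.Connected)
    (u₁ u₂ : α) (v₁ v₂ : β) (h : (G □ H).Adj (u₁, v₁) (u₂, v₂)) :
    (G □ H).closedNbhd (u₁, v₁) ≠ (G □ H).closedNbhd (u₂, v₂) := by
  rw [SimpleGraph.boxProd_adj] at h
  rcases h with ⟨hadj, rfl⟩ | ⟨hadj, rfl⟩
  · -- G.Adj u₁ u₂, v₁ = v₂
    obtain ⟨v', hv'⟩ := conn_exists_adj hH v₁
    intro heq
    have hmem : (u₁, v') ∈ (G □ H).closedNbhd (u₁, v₁) :=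
      Or.inr (SimpleGraph.boxProd_adj.mpr (Or.inr ⟨hv', rfl⟩))
    rw [heq] at hmem
    rcases hmem with heq' | hadj'
    · exact hadj.ne (Prod.ext_iff.mp heq').1
    · rcases SimpleGraph.boxProd_adj.mp hadj' with ⟨h1, h2⟩ | ⟨h1, h2⟩ <;> simp_all
  · obtain ⟨u', hu'⟩ := conn_exists_adj hG u₁
    intro heq
    have hmem : (u', v₁) ∈ (G □ H).closedNbhd (u₁, v₁) :=
      Or.inr (SimpleGraph.boxProd_adj.mpr (Or.inl ⟨hu', rfl⟩))
    rw [heq] at hmem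
    rcases hmem with heq' | hadj'
    · exact hadj.ne (Prod.ext_iff.mp heq').2
    · rcases SimpleGraph.boxProd_adj.mp hadj' with ⟨h1, h2⟩ | ⟨h1, h2⟩ <;> simp_all
end

section
/- Let G and H be connected simple graphs, each having at least two vertices. Then χ_lid(G □ H) ≤ χ(G)·χ(H), where χ denotes the chromatic number. -/
open SimpleGraph

private lemma exists_adj_of_connected {V : Type*} [Nontrivial V] {G : SimpleGraph V}
    (hG : G.Connected) (v : V) : ∃ w, G.Adj v w := by
  obtain ⟨w, hw⟩ := exists_ne v
  obtain ⟨p⟩ := hG.preconnected v w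
  cases p with
  | nil => exact absurd rfl hw
  | cons h _ => exact ⟨_, h⟩

private lemma image_ne_horiz {α β : Type*} {G : SimpleGraph α} {H : SimpleGraph β}
    {k l : ℕ} (g : G.Coloring (Fin k)) (h : H.Coloring (Fin l))
    {u u' : α} {v : β} (huu : G.Adj u u') {v' : β} (hvv : H.Adj v v') :
    (fun x : α × β => ((g x.1 : Fin k), (h x.2 : Fin l))) '' (G □ H).closedNbhd (u, v) ≠
    (fun x : α × β => ((g x.1 : Fin k), (h x.2 : Fin l))) '' (G □ H).closedNbhd (u', v) := by
  intro heq
  have hmem : ((g u : Fin k), (h v' : Fin l)) ∈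
      (fun x : α × β => ((g x.1 : Fin k), (h x.2 : Fin l))) '' (G □ H).closedNbhd (u, v) :=
    ⟨(u, v'), Or.inr (by exact SimpleGraph.boxProd_adj.mpr (Or.inr ⟨hvv, rfl⟩)), rfl⟩
  rw [heq] at hmem
  obtain ⟨z, hz, hfz⟩ := hmem
  have h1 : g z.1 = g u := congrArg Prod.fst hfz
  have h2 : h z.2 = h v' := congrArg Prod.snd hfz
  rcases hz with hz | hz
  · subst hz
    exact h.valid hvv h2
  · rcases SimpleGraph.boxProd_adj.mp hz with ⟨ha, he⟩ | ⟨ha, he⟩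
    · rw [← he] at h2; exact h.valid hvv h2
    · rw [← he] at h1; exact g.valid huu h1.symm

private lemma image_ne_vert {α β : Type*} {G : SimpleGraph α} {H : SimpleGraph β}
    {k l : ℕ} (g : G.Coloring (Fin k)) (h : H.Coloring (Fin l))
    {u : α} {v v' : β} (hvv : H.Adj v v') {u' : α} (huu : G.Adj u u') :
    (fun x : α × β => ((g x.1 : Fin k), (h x.2 : Fin l))) '' (G □ H).closedNbhd (u, v) ≠
    (fun x : α × β => ((g x.1 : Fin k), (h x.2 : Fin l))) '' (G □ H).closedNbhd (u, v') := by
  intro heq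
  have hmem : ((g u' : Fin k), (h v : Fin l)) ∈
      (fun x : α × β => ((g x.1 : Fin k), (h x.2 : Fin l))) '' (G □ H).closedNbhd (u, v) :=
    ⟨(u', v), Or.inr (by exact SimpleGraph.boxProd_adj.mpr (Or.inl ⟨huu, rfl⟩)), rfl⟩
  rw [heq] at hmem
  obtain ⟨z, hz, hfz⟩ := hmem
  have h1 : g z.1 = g u' := congrArg Prod.fst hfz
  have h2 : h z.2 = h v := congrArg Prod.snd hfz
  rcases hz with hz | hz
  · subst hz
    exact g.valid huu h1
  · rcases SimpleGraph.boxProd_adj.mp hz with ⟨ha, he⟩ | ⟨ha, he⟩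
    · rw [← he] at h2; exact h.valid hvv h2.symm
    · rw [← he] at h1; exact g.valid huu h1

private lemma lidColorable_boxProd {α β : Type*} {G : SimpleGraph α} {H : SimpleGraph β}
    {k l : ℕ} (hg : G.Colorable k) (hh : H.Colorable l)
    (hGadj : ∀ v : α, ∃ w, G.Adj v w) (hHadj : ∀ v : β, ∃ w, H.Adj v w) :
    (G □ H).LidColorable (k * l) := by
  obtain ⟨g⟩ := hg
  obtain ⟨h⟩ := hh
  refine ⟨fun x => finProdFinEquiv (g x.1, h x.2), ?_, ?_⟩
  · intro x y hxy heq
    have h' := finProdFinEquiv.injective heq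
    rcases SimpleGraph.boxProd_adj.mp hxy with ⟨ha, _⟩ | ⟨ha, _⟩
    · exact g.valid ha (congrArg Prod.fst h')
    · exact h.valid ha (congrArg Prod.snd h')
  · intro x y hxy _ heq
    have heq' : (fun x : α × β => ((g x.1 : Fin k), (h x.2 : Fin l))) '' (G □ H).closedNbhd x
        = (fun x : α × β => ((g x.1 : Fin k), (h x.2 : Fin l))) '' (G □ H).closedNbhd y := by
      apply Set.image_injective.mpr finProdFinEquiv.injective
      rw [← Set.image_comp, ← Set.image_comp]
      exact heq
    obtain ⟨u, v⟩ := x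
    obtain ⟨u', v'⟩ := y
    rcases SimpleGraph.boxProd_adj.mp hxy with ⟨ha, he⟩ | ⟨ha, he⟩
    · simp only at he; subst he
      obtain ⟨w, hw⟩ := hHadj v
      exact image_ne_horiz g h ha hw heq'
    · simp only at he; subst he
      obtain ⟨w, hw⟩ := hGadj u
      exact image_ne_vert g h ha hw heq'

/-- For connected graphs `G` and `H` with at least two vertices each,
`χ_lid(G □ H) ≤ χ(G) · χ(H)`. -/
theorem lid_stmt_1 {α β : Type*} [Nontrivial α] [Nontrivial β]
    (G : SimpleGraph α) (H : SimpleGraph β) (hG : G.Connected) (hH : H.Connected) :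
    (G □ H).lidChromaticNumber ≤ G.chromaticNumber * H.chromaticNumber := by
  have hGpos : G.chromaticNumber ≠ 0 := by
    rcases eq_or_ne G.chromaticNumber ⊤ with ht | ht
    · simp [ht]
    · exact (G.chromaticNumber_pos (G.colorable_of_chromaticNumber_ne_top ht)).ne'
  have hHpos : H.chromaticNumber ≠ 0 := by
    rcases eq_or_ne H.chromaticNumber ⊤ with ht | ht
    · simp [ht]
    · exact (H.chromaticNumber_pos (H.colorable_of_chromaticNumber_ne_top ht)).ne'
  by_cases hGt : G.chromaticNumber = ⊤
  · rw [hGt, ENat.top_mul hHpos]; exact le_top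
  by_cases hHt : H.chromaticNumber = ⊤
  · rw [hHt, ENat.mul_top hGpos]; exact le_top
  have hcG := G.colorable_of_chromaticNumber_ne_top hGt
  have hcH := H.colorable_of_chromaticNumber_ne_top hHt
  have key := lidColorable_boxProd hcG hcH
    (exists_adj_of_connected hG) (exists_adj_of_connected hH)
  calc (G □ H).lidChromaticNumber
      ≤ ((G.chromaticNumber.toNat * H.chromaticNumber.toNat : ℕ) : ℕ∞) := iInf₂_le _ key
    _ = G.chromaticNumber * H.chromaticNumber := by
        push_cast
        rw [ENat.coe_toNat hGt, ENat.coe_toNat hHt]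
end

section
/- For every integer n ≥ 3, the lid-chromatic number of the Cartesian product of the triangle C_3 and the cycle C_n satisfies χ_lid(C_3 □ C_n) = 5. -/
open SimpleGraph

/-! ### Auxiliary material for the proof -/

namespace LidAux

lemma cyc_adj (m : ℕ) (j y : Fin (m+3)) :
    (cycleGraph (m+3)).Adj j y ↔ y = j - 1 ∨ y = j + 1 := by
  have h := cycleGraph_neighborSet (n := m+1) (v := j)
  rw [← SimpleGraph.mem_neighborSet, h]; simp

/-- Explicit description of closed neighborhoods in `C₃ □ Cₙ`. -/
lemma closedNbhd_eq (m : ℕ) (i : Fin 3) (j : Fin (m+3)) :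
    (cycleGraph 3 □ cycleGraph (m+3)).closedNbhd (i, j) =
      {(i, j), (i+1, j), (i+2, j), (i, j-1), (i, j+1)} := by
  have h3 : ∀ a b : Fin 3, (a ≠ b) ↔ (b = a + 1 ∨ b = a + 2) := by decide
  ext ⟨x, y⟩
  simp only [SimpleGraph.closedNbhd, Set.mem_insert_iff, SimpleGraph.mem_neighborSet,
    SimpleGraph.boxProd_adj, cycleGraph_three_eq_top, top_adj, cyc_adj,
    Set.mem_singleton_iff, Prod.mk.injEq, h3]
  tauto

/-- Image of a closed neighborhood under a coloring, explicitly. -/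
lemma image_closedNbhd {α : Type*} (m : ℕ) (f : Fin 3 × Fin (m+3) → α)
    (i : Fin 3) (j : Fin (m+3)) :
    f '' (cycleGraph 3 □ cycleGraph (m+3)).closedNbhd (i, j) =
      {f (i, j), f (i+1, j), f (i+2, j), f (i, j-1), f (i, j+1)} := by
  rw [closedNbhd_eq]
  simp [Set.image_insert_eq]

/-! #### The three column colorings -/

def colA : Fin 3 → Fin 5 := ![0, 1, 2]
def colB : Fin 3 → Fin 5 := ![1, 3, 4]
def colC : Fin 3 → Fin 5 := ![2, 4, 1]

/-- The pattern of columns: alternate `A`, `B`; when `n` is odd the last column is `C`. -/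
def patN (n k : ℕ) : Fin 3 → Fin 5 :=
  if n % 2 = 1 ∧ k % n = n - 1 then colC
  else if (k % n) % 2 = 0 then colA else colB

lemma patN_mod (n k : ℕ) : patN n (k % n) = patN n k := by
  unfold patN
  rw [Nat.mod_mod_of_dvd _ dvd_rfl]

/-- Color set of the closed neighborhood of row `i`, given the column `q`, its left
neighbor column `p` and right neighbor column `r` (as a `Finset`). -/
def CS (q p r : Fin 3 → Fin 5) (i : Fin 3) : Finset (Fin 5) :=
  {q i, q (i+1), q (i+2), p i, r i}

/-- All the lid-coloring conditions involving the column `q` and the edge from `q` to `r`,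
where the four consecutive columns are `p q r s`. -/
def windowOK (p q r s : Fin 3 → Fin 5) : Prop :=
  (∀ i i' : Fin 3, i ≠ i' → q i ≠ q i' ∧ CS q p r i ≠ CS q p r i') ∧
  (∀ i : Fin 3, q i ≠ r i ∧ CS q p r i ≠ CS r q s i)

instance (p q r s : Fin 3 → Fin 5) : Decidable (windowOK p q r s) := by
  unfold windowOK; infer_instance

lemma wABAB : windowOK colA colB colA colB := by decide
lemma wBABA : windowOK colB colA colB colA := by decide
lemma wCABA : windowOK colC colA colB colA := by decide
lemma wBABC : windowOK colB colA colB colC := by decide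
lemma wABCA : windowOK colA colB colC colA := by decide
lemma wBCAB : windowOK colB colC colA colB := by decide
lemma wCABC : windowOK colC colA colB colC := by decide

lemma patN_even {n : ℕ} (hn : 0 < n) (h2 : n % 2 = 0) (k : ℕ) :
    patN n k = if k % 2 = 0 then colA else colB := by
  unfold patN
  rw [if_neg (by omega), Nat.mod_mod_of_dvd _ (by omega : 2 ∣ n)]

lemma patN_odd {n : ℕ} (h2 : n % 2 = 1) (k : ℕ) :
    patN n k = if k % n = n - 1 then colC
      else if (k % n) % 2 = 0 then colA else colB := by
  unfold patN
  simp [h2]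

/-- The key combinatorial fact: every window of four consecutive columns
(cyclically) satisfies `windowOK`. -/
lemma window_mem {n k : ℕ} (hn : 3 ≤ n) (hk : k < n) :
    windowOK (patN n (k + (n-1))) (patN n k) (patN n (k+1)) (patN n (k+2)) := by
  have hmod : ∀ x : ℕ, x < n → x % n = x := fun x hx => Nat.mod_eq_of_lt hx
  rcases Nat.mod_two_eq_zero_or_one n with h2 | h2
  · -- n even
    rcases Nat.mod_two_eq_zero_or_one k with hke | hke
    · have e1 : patN n (k + (n-1)) = colB := by
        rw [patN_even (by omega) h2, if_neg (by omega)]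
      have e2 : patN n k = colA := by
        rw [patN_even (by omega) h2, if_pos (by omega)]
      have e3 : patN n (k+1) = colB := by
        rw [patN_even (by omega) h2, if_neg (by omega)]
      have e4 : patN n (k+2) = colA := by
        rw [patN_even (by omega) h2, if_pos (by omega)]
      rw [e1, e2, e3, e4]; exact wBABA
    · have e1 : patN n (k + (n-1)) = colA := by
        rw [patN_even (by omega) h2, if_pos (by omega)]
      have e2 : patN n k = colB := by
        rw [patN_even (by omega) h2, if_neg (by omega)]
      have e3 : patN n (k+1) = colA := by
        rw [patN_even (by omega) h2, if_pos (by omega)]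
      have e4 : patN n (k+2) = colB := by
        rw [patN_even (by omega) h2, if_neg (by omega)]
      rw [e1, e2, e3, e4]; exact wABAB
  · -- n odd
    rcases eq_or_ne k 0 with rfl | hk0
    · -- k = 0 : window (C, A, B, ·)
      have e1 : patN n (0 + (n-1)) = colC := by
        rw [patN_odd h2, show (0 + (n-1)) % n = n - 1 by
            rw [show 0 + (n-1) = n - 1 by omega]; exact hmod _ (by omega), if_pos rfl]
      have e2 : patN n 0 = colA := by
        rw [patN_odd h2, show 0 % n = 0 from hmod _ (by omega), if_neg (by omega),
          if_pos (by omega)]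
      have e3 : patN n 1 = colB := by
        rw [patN_odd h2, show 1 % n = 1 from hmod _ (by omega), if_neg (by omega),
          if_neg (by omega)]
      rcases eq_or_ne n 3 with rfl | hn3
      · have e4 : patN 3 2 = colC := by
          rw [patN_odd h2, show 2 % 3 = 2 from rfl, if_pos rfl]
        rw [e1, e2, e3]; try rw [e4]
        exact wCABC
      · have e4 : patN n 2 = colA := by
          rw [patN_odd h2, show 2 % n = 2 from hmod _ (by omega), if_neg (by omega),
            if_pos (by omega)]
        rw [e1, e2, e3, e4]; exact wCABA
    rcases eq_or_ne k (n-1) with rfl | hk1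
    · -- k = n-1 : window (B, C, A, B)
      have e1 : patN n (n - 1 + (n-1)) = colB := by
        rw [patN_odd h2, show (n - 1 + (n-1)) % n = n - 2 by
            rw [show n - 1 + (n-1) = (n-2) + n by omega, Nat.add_mod_right]
            exact hmod _ (by omega),
          if_neg (by omega), if_neg (by omega)]
      have e2 : patN n (n-1) = colC := by
        rw [patN_odd h2, show (n-1) % n = n - 1 from hmod _ (by omega), if_pos rfl]
      have e3 : patN n (n - 1 + 1) = colA := by
        rw [patN_odd h2, show (n - 1 + 1) % n = 0 by
            rw [show n - 1 + 1 = 0 + n by omega, Nat.add_mod_right]; exact hmod _ (by omega),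
          if_neg (by omega), if_pos (by omega)]
      have e4 : patN n (n - 1 + 2) = colB := by
        rw [patN_odd h2, show (n - 1 + 2) % n = 1 by
            rw [show n - 1 + 2 = 1 + n by omega, Nat.add_mod_right]; exact hmod _ (by omega),
          if_neg (by omega), if_neg (by omega)]
      rw [e1, e2, e3, e4]; exact wBCAB
    rcases eq_or_ne k (n-2) with rfl | hk2
    · -- k = n-2 : window (A, B, C, A)
      have e1 : patN n (n - 2 + (n-1)) = colA := by
        rw [patN_odd h2, show (n - 2 + (n-1)) % n = n - 3 by
            rw [show n - 2 + (n-1) = (n-3) + n by omega, Nat.add_mod_right]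
            exact hmod _ (by omega),
          if_neg (by omega), if_pos (by omega)]
      have e2 : patN n (n-2) = colB := by
        rw [patN_odd h2, show (n-2) % n = n - 2 from hmod _ (by omega), if_neg (by omega),
          if_neg (by omega)]
      have e3 : patN n (n - 2 + 1) = colC := by
        rw [patN_odd h2, show (n - 2 + 1) % n = n - 1 by
            rw [show n - 2 + 1 = n - 1 by omega]; exact hmod _ (by omega), if_pos rfl]
      have e4 : patN n (n - 2 + 2) = colA := by
        rw [patN_odd h2, show (n - 2 + 2) % n = 0 by
            rw [show n - 2 + 2 = 0 + n by omega, Nat.add_mod_right]; exact hmod _ (by omega),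
          if_neg (by omega), if_pos (by omega)]
      rw [e1, e2, e3, e4]; exact wABCA
    rcases eq_or_ne k (n-3) with rfl | hk3
    · -- k = n-3 : window (B, A, B, C)
      have e1 : patN n (n - 3 + (n-1)) = colB := by
        rw [patN_odd h2, show (n - 3 + (n-1)) % n = n - 4 by
            rw [show n - 3 + (n-1) = (n-4) + n by omega, Nat.add_mod_right]
            exact hmod _ (by omega),
          if_neg (by omega), if_neg (by omega)]
      have e2 : patN n (n-3) = colA := by
        rw [patN_odd h2, show (n-3) % n = n - 3 from hmod _ (by omega), if_neg (by omega),
          if_pos (by omega)]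
      have e3 : patN n (n - 3 + 1) = colB := by
        rw [patN_odd h2, show (n - 3 + 1) % n = n - 2 by
            rw [show n - 3 + 1 = n - 2 by omega]; exact hmod _ (by omega),
          if_neg (by omega), if_neg (by omega)]
      have e4 : patN n (n - 3 + 2) = colC := by
        rw [patN_odd h2, show (n - 3 + 2) % n = n - 1 by
            rw [show n - 3 + 2 = n - 1 by omega]; exact hmod _ (by omega), if_pos rfl]
      rw [e1, e2, e3, e4]; exact wBABC
    -- 1 ≤ k ≤ n - 4
    have ek1 : (k + (n-1)) % n = k - 1 := by
      rw [show k + (n-1) = (k-1) + n by omega, Nat.add_mod_right]; exact hmod _ (by omega)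
    have ek2 : k % n = k := hmod _ (by omega)
    have ek3 : (k+1) % n = k + 1 := hmod _ (by omega)
    have ek4 : (k+2) % n = k + 2 := hmod _ (by omega)
    rcases Nat.mod_two_eq_zero_or_one k with hke | hke
    · have e1 : patN n (k + (n-1)) = colB := by
        rw [patN_odd h2, ek1, if_neg (by omega), if_neg (by omega)]
      have e2 : patN n k = colA := by
        rw [patN_odd h2, ek2, if_neg (by omega), if_pos (by omega)]
      have e3 : patN n (k+1) = colB := by
        rw [patN_odd h2, ek3, if_neg (by omega), if_neg (by omega)]
      have e4 : patN n (k+2) = colA := by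
        rw [patN_odd h2, ek4, if_neg (by omega), if_pos (by omega)]
      rw [e1, e2, e3, e4]; exact wBABA
    · have e1 : patN n (k + (n-1)) = colA := by
        rw [patN_odd h2, ek1, if_neg (by omega), if_pos (by omega)]
      have e2 : patN n k = colB := by
        rw [patN_odd h2, ek2, if_neg (by omega), if_neg (by omega)]
      have e3 : patN n (k+1) = colA := by
        rw [patN_odd h2, ek3, if_neg (by omega), if_pos (by omega)]
      have e4 : patN n (k+2) = colB := by
        rw [patN_odd h2, ek4, if_neg (by omega), if_neg (by omega)]
      rw [e1, e2, e3, e4]; exact wABAB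

section Upper

variable {m : ℕ}

/-- The coloring pattern as a function on `Fin (m+3)`. -/
def pat (m : ℕ) (j : Fin (m+3)) : Fin 3 → Fin 5 := patN (m+3) j.val

lemma val_one' : ((1 : Fin (m+3)) : ℕ) = 1 := rfl

lemma pat_sub_one (j : Fin (m+3)) : pat m (j - 1) = patN (m+3) (j.val + (m+3-1)) := by
  have h : ((j - 1 : Fin (m+3)) : ℕ) = (j.val + (m+3-1)) % (m+3) := by
    rw [Fin.sub_def]
    show (m+3 - ((1:Fin (m+3)):ℕ) + j.val) % (m+3) = _
    rw [val_one']
    congr 1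
    omega
  unfold pat
  rw [h, patN_mod]

lemma pat_add_one (j : Fin (m+3)) : pat m (j + 1) = patN (m+3) (j.val + 1) := by
  have h : ((j + 1 : Fin (m+3)) : ℕ) = (j.val + 1) % (m+3) := by
    rw [Fin.add_def, val_one']
  unfold pat
  rw [h, patN_mod]

lemma pat_add_two (j : Fin (m+3)) : pat m (j + 1 + 1) = patN (m+3) (j.val + 2) := by
  rw [pat_add_one (j+1)]
  have hv : ((j + 1 : Fin (m+3)) : ℕ) = (j.val + 1) % (m+3) := by
    rw [Fin.add_def, val_one']
  rw [hv, ← patN_mod (m+3) ((j.val + 1) % (m+3) + 1), Nat.mod_add_mod,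
    ← patN_mod (m+3) (j.val + 2)]

lemma hW (j : Fin (m+3)) :
    windowOK (pat m (j-1)) (pat m j) (pat m (j+1)) (pat m (j+1+1)) := by
  rw [pat_sub_one, pat_add_one, pat_add_two]
  exact window_mem (by omega) j.isLt

lemma himg (i : Fin 3) (j : Fin (m+3)) :
    (fun v : Fin 3 × Fin (m+3) => pat m v.2 v.1) '' (cycleGraph 3 □ cycleGraph (m+3)).closedNbhd (i, j)
      = ↑(CS (pat m j) (pat m (j-1)) (pat m (j+1)) i) := by
  rw [image_closedNbhd]
  simp only [CS, Finset.coe_insert, Finset.coe_singleton]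

lemma lid5 (m : ℕ) : (cycleGraph 3 □ cycleGraph (m+3)).LidColorable 5 := by
  refine ⟨fun v => pat m v.2 v.1, ?_, ?_⟩
  · rintro ⟨i, j⟩ ⟨i', j'⟩ huw
    rw [SimpleGraph.boxProd_adj] at huw
    rcases huw with ⟨ha, hb⟩ | ⟨ha, hb⟩
    · simp only at ha hb
      subst hb
      rw [cycleGraph_three_eq_top, top_adj] at ha
      exact ((hW j).1 i i' ha).1
    · simp only at ha hb
      subst hb
      rw [cyc_adj] at ha
      rcases ha with rfl | rfl
      · have h := ((hW (j - 1)).2 i).1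
        rw [sub_add_cancel] at h
        exact h.symm
      · exact ((hW j).2 i).1
  · rintro ⟨i, j⟩ ⟨i', j'⟩ huw _
    rw [SimpleGraph.boxProd_adj] at huw
    rcases huw with ⟨ha, hb⟩ | ⟨ha, hb⟩
    · simp only at ha hb
      subst hb
      rw [cycleGraph_three_eq_top, top_adj] at ha
      rw [himg, himg, ne_eq, Finset.coe_inj]
      exact ((hW j).1 i i' ha).2
    · simp only at ha hb
      subst hb
      rw [cyc_adj] at ha
      rcases ha with rfl | rfl
      · rw [himg, himg, ne_eq, Finset.coe_inj, sub_add_cancel]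
        have h := ((hW (j - 1)).2 i).2
        rw [sub_add_cancel] at h
        exact h.symm
      · rw [himg, himg, ne_eq, Finset.coe_inj, show j + 1 - 1 = j from add_sub_cancel_right j 1]
        exact ((hW j).2 i).2

end Upper

section Lower

/-- An injective recoloring of a lid coloring is a lid coloring. -/
lemma lid_comp {V α β : Type*} {G : SimpleGraph V} {f : V → α} {g : α → β}
    (hg : Function.Injective g) (hf : G.IsLidColoring f) : G.IsLidColoring (g ∘ f) := by
  refine ⟨fun u w huw h => hf.1 huw (hg h), fun u w huw hne h => ?_⟩
  apply hf.2 huw hne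
  apply Set.image_injective.mpr hg
  rwa [← Set.image_comp, ← Set.image_comp]

lemma no4 (m : ℕ) : ¬ (cycleGraph 3 □ cycleGraph (m+3)).LidColorable 4 := by
  rintro ⟨f, hprop, hlid⟩
  have hadj : ∀ i i' : Fin 3, i ≠ i' →
      (cycleGraph 3 □ cycleGraph (m+3)).Adj (i, 0) (i', 0) := by
    intro i i' h
    rw [SimpleGraph.boxProd_adj]
    exact Or.inl ⟨by rw [cycleGraph_three_eq_top, top_adj]; exact h, rfl⟩
  have hv01 : (((0:Fin (m+3)) + 1 : Fin (m+3)) : ℕ) = 1 := by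
    rw [Fin.add_def]
    show (((0:Fin (m+3)):ℕ) + ((1:Fin (m+3)):ℕ)) % (m+3) = 1
    rw [val_one', show ((0:Fin (m+3)):ℕ) = 0 from rfl]
    exact Nat.mod_eq_of_lt (by omega)
  have hvm : (((0:Fin (m+3)) - 1 : Fin (m+3)) : ℕ) = m + 2 := by
    rw [Fin.sub_def]
    show (m + 3 - ((1:Fin (m+3)):ℕ) + ((0:Fin (m+3)):ℕ)) % (m+3) = m + 2
    rw [val_one', show ((0:Fin (m+3)):ℕ) = 0 from rfl, Nat.mod_eq_of_lt (by omega)]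
    omega
  have hnb : ∀ i i' : Fin 3, i ≠ i' →
      (cycleGraph 3 □ cycleGraph (m+3)).closedNbhd (i, 0) ≠
      (cycleGraph 3 □ cycleGraph (m+3)).closedNbhd (i', 0) := by
    intro i i' h hEq
    have hmem : ((i, (0:Fin (m+3)) + 1) : Fin 3 × Fin (m+3)) ∈
        (cycleGraph 3 □ cycleGraph (m+3)).closedNbhd (i, 0) := by
      rw [closedNbhd_eq]
      simp
    rw [hEq, closedNbhd_eq] at hmem
    simp only [Set.mem_insert_iff, Set.mem_singleton_iff, Prod.mk.injEq] at hmem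
    rcases hmem with ⟨h1, h2⟩ | ⟨h1, h2⟩ | ⟨h1, h2⟩ | ⟨h1, h2⟩ | ⟨h1, h2⟩
    · exact absurd (congrArg Fin.val h2) (by rw [hv01]; simp)
    · exact absurd (congrArg Fin.val h2) (by rw [hv01]; simp)
    · exact absurd (congrArg Fin.val h2) (by rw [hv01]; simp)
    · exact absurd (congrArg Fin.val h2) (by rw [hv01, hvm]; omega)
    · exact h h1
  have himg4 : ∀ i : Fin 3, f '' (cycleGraph 3 □ cycleGraph (m+3)).closedNbhd (i, 0) =
      ↑({f (i,0), f (i+1,0), f (i+2,0), f (i,0-1), f (i,0+1)} : Finset (Fin 4)) := by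
    intro i
    rw [image_closedNbhd]
    simp only [Finset.coe_insert, Finset.coe_singleton]
  set S : Finset (Fin 4) := {f (0,0), f (1,0), f (2,0)} with hS
  have e01 : (0:Fin 3) + 1 = 1 := by decide
  have e02 : (0:Fin 3) + 2 = 2 := by decide
  have e11 : (1:Fin 3) + 1 = 2 := by decide
  have e12 : (1:Fin 3) + 2 = 0 := by decide
  have e21 : (2:Fin 3) + 1 = 0 := by decide
  have e22 : (2:Fin 3) + 2 = 1 := by decide
  have hsplit : ∀ i : Fin 3,
      ({f (i,0), f (i+1,0), f (i+2,0), f (i,0-1), f (i,0+1)} : Finset (Fin 4))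
        = S ∪ {f (i,0-1), f (i,0+1)} := by
    intro i
    fin_cases i <;>
      simp only [e01, e02, e11, e12, e21, e22, hS] <;>
      · ext x
        simp only [Finset.mem_insert, Finset.mem_singleton, Finset.mem_union]
        tauto
  have h01 : f (0,0) ≠ f (1,0) := hprop (hadj 0 1 (by decide))
  have h02 : f (0,0) ≠ f (2,0) := hprop (hadj 0 2 (by decide))
  have h12 : f (1,0) ≠ f (2,0) := hprop (hadj 1 2 (by decide))
  have hnm1 : f (0,0) ∉ ({f (1,0), f (2,0)} : Finset (Fin 4)) := by
    simp only [Finset.mem_insert, Finset.mem_singleton]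
    push_neg
    exact ⟨h01, h02⟩
  have hnm2 : f (1,0) ∉ ({f (2,0)} : Finset (Fin 4)) := by
    simp only [Finset.mem_singleton]
    exact h12
  have hScard : S.card = 3 := by
    rw [hS, Finset.card_insert_of_notMem hnm1,
      Finset.card_insert_of_notMem hnm2, Finset.card_singleton]
  have hcompl : (Sᶜ : Finset (Fin 4)).card = 1 := by
    rw [Finset.card_compl, hScard]
    rfl
  obtain ⟨mc, hmc⟩ := Finset.card_eq_one.mp hcompl
  have hmem4 : ∀ x : Fin 4, x ∈ S ∨ x = mc := by
    intro x
    by_cases hx : x ∈ S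
    · exact Or.inl hx
    · right
      have : x ∈ Sᶜ := Finset.mem_compl.mpr hx
      rwa [hmc, Finset.mem_singleton] at this
  have hbetween : ∀ T : Finset (Fin 4), S ⊆ T → T = S ∨ T = insert mc S := by
    intro T h1
    have h2 : T ⊆ insert mc S := by
      intro a _
      rcases hmem4 a with h | rfl
      · exact Finset.mem_insert_of_mem h
      · exact Finset.mem_insert_self _ _
    by_cases hmcT : mc ∈ T
    · exact Or.inr (subset_antisymm h2 (Finset.insert_subset hmcT h1))
    · refine Or.inl (subset_antisymm ?_ h1)
      intro a ha
      rcases Finset.mem_insert.mp (h2 ha) with rfl | h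
      · exact absurd ha hmcT
      · exact h
  have hd : ∀ i i' : Fin 3, i ≠ i' →
      S ∪ {f (i,0-1), f (i,0+1)} ≠ S ∪ {f (i',0-1), f (i',0+1)} := by
    intro i i' h hEq
    apply hlid (hadj i i' h) (hnb i i' h)
    rw [himg4 i, himg4 i', hsplit i, hsplit i', hEq]
  rcases hbetween (S ∪ {f (0,0-1), f (0,0+1)}) Finset.subset_union_left with h0 | h0 <;>
    rcases hbetween (S ∪ {f (1,0-1), f (1,0+1)}) Finset.subset_union_left with h1 | h1 <;>
      rcases hbetween (S ∪ {f (2,0-1), f (2,0+1)}) Finset.subset_union_left with h2 | h2 <;>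
        first
          | exact hd 0 1 (by decide) (h0.trans h1.symm)
          | exact hd 0 2 (by decide) (h0.trans h2.symm)
          | exact hd 1 2 (by decide) (h1.trans h2.symm)

lemma lid_ge (m k : ℕ) (h : (cycleGraph 3 □ cycleGraph (m+3)).LidColorable k) : 5 ≤ k := by
  by_contra hlt
  push_neg at hlt
  obtain ⟨f, hf⟩ := h
  exact no4 m ⟨(Fin.castLE (by omega : k ≤ 4)) ∘ f,
    lid_comp (Fin.castLE_injective _) hf⟩

end Lower

end LidAux

/-- For every `n ≥ 3`, `χ_lid(C_3 □ C_n) = 5`. -/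
theorem lid_stmt_4 (n : ℕ) (hn : 3 ≤ n) :
    (cycleGraph 3 □ cycleGraph n).lidChromaticNumber = 5 := by
  obtain ⟨m, rfl⟩ : ∃ m, n = m + 3 := ⟨n - 3, by omega⟩
  unfold SimpleGraph.lidChromaticNumber
  apply le_antisymm
  · have h5 : (5:ℕ) ∈ {k : ℕ | (cycleGraph 3 □ cycleGraph (m+3)).LidColorable k} :=
      LidAux.lid5 m
    exact le_trans (iInf₂_le 5 h5) (by norm_num)
  · refine le_iInf₂ fun k hk => ?_
    exact_mod_cast LidAux.lid_ge m k hk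
end

section
/- For every pair of even integers m and n with 4 ≤ m ≤ n, the lid-chromatic number of the Cartesian product of the cycles C_m and C_n satisfies χ_lid(C_m □ C_n) = 3. -/
open SimpleGraph

lemma adj_parity {m : ℕ} (hm : Even m) {u v : Fin m} (h : (cycleGraph m).Adj u v) :
    (u.val + v.val) % 2 = 1 := by
  rw [cycleGraph_adj'] at h
  have hm2 : m % 2 = 0 := Nat.even_iff.mp hm
  have hu := u.isLt
  have hv := v.isLt
  rcases h with h | h
  · rw [Fin.sub_def] at h
    simp only at h
    have h2 : (((m - v.val) + u.val) % m) % 2 = ((m - v.val) + u.val) % 2 :=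
      Nat.mod_mod_of_dvd _ hm.two_dvd
    omega
  · rw [Fin.sub_def] at h
    simp only at h
    have h2 : (((m - u.val) + v.val) % m) % 2 = ((m - u.val) + v.val) % 2 :=
      Nat.mod_mod_of_dvd _ hm.two_dvd
    omega

lemma adj_succ {m : ℕ} [NeZero m] (h2 : 2 ≤ m) (v : Fin m) : (cycleGraph m).Adj v (v + 1) := by
  rw [cycleGraph_adj']
  right
  rw [add_sub_cancel_left, Fin.val_one']
  exact Nat.mod_eq_of_lt h2

lemma val_add_one {m : ℕ} [NeZero m] (h2 : 2 ≤ m) (v : Fin m) :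
    (v + 1).val = (v.val + 1) % m := by
  have h1 : (1 : Fin m).val = 1 := by rw [Fin.val_one']; exact Nat.mod_eq_of_lt h2
  rw [Fin.add_def, h1]

lemma val_add_one_parity {m : ℕ} [NeZero m] (hm : Even m) (h2 : 2 ≤ m) (v : Fin m) :
    (v + 1).val % 2 = (v.val + 1) % 2 := by
  rw [val_add_one h2]
  exact Nat.mod_mod_of_dvd _ hm.two_dvd

/-- the explicit lid 3-coloring of the torus grid -/
def lidF {m n : ℕ} (v : Fin m × Fin n) : Fin 3 :=
  if (v.1.val + v.2.val) % 2 = 1 then 0 else if v.1.val % 2 = 0 then 1 else 2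

section
variable {m n : ℕ} (hm : Even m) (hn : Even n)

lemma box_parity_flip (hm : Even m) (hn : Even n) {u w : Fin m × Fin n}
    (h : (cycleGraph m □ cycleGraph n).Adj u w) :
    (u.1.val + u.2.val) % 2 ≠ (w.1.val + w.2.val) % 2 := by
  rcases (boxProd_adj).mp h with ⟨h1, h2⟩ | ⟨h1, h2⟩
  · have := adj_parity hm h1
    rw [h2]
    omega
  · have := adj_parity hn h1
    rw [h2]
    omega

lemma lidF_proper (hm : Even m) (hn : Even n) {u w : Fin m × Fin n}
    (h : (cycleGraph m □ cycleGraph n).Adj u w) : lidF u ≠ lidF w := by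
  have hS := box_parity_flip hm hn h
  unfold lidF
  split_ifs <;> first | (exfalso; omega) | decide

lemma lidF_neighbor_zero (hm : Even m) (hn : Even n) {u x : Fin m × Fin n}
    (hu : (u.1.val + u.2.val) % 2 = 0)
    (h : (cycleGraph m □ cycleGraph n).Adj u x) : lidF x = 0 := by
  have hS := box_parity_flip hm hn h
  unfold lidF
  rw [if_pos (by omega)]

/-- key one-sided lid lemma -/
lemma oneSide (hm : Even m) (hn : Even n) (h2m : 2 ≤ m) (h2n : 2 ≤ n)
    {u w : Fin m × Fin n} (h : (cycleGraph m □ cycleGraph n).Adj u w)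
    (hu : (u.1.val + u.2.val) % 2 = 0) :
    lidF '' (cycleGraph m □ cycleGraph n).closedNbhd u
      ≠ lidF '' (cycleGraph m □ cycleGraph n).closedNbhd w := by
  haveI : NeZero m := ⟨by omega⟩
  haveI : NeZero n := ⟨by omega⟩
  set G := cycleGraph m □ cycleGraph n with hG
  set c : Fin 3 := if u.1.val % 2 = 0 then 2 else 1 with hc
  have hw : (w.1.val + w.2.val) % 2 = 1 := by
    have := box_parity_flip hm hn h; omega
  have hcnot : c ∉ lidF '' G.closedNbhd u := by
    rintro ⟨x, hx, hfx⟩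
    rcases hx with rfl | hx
    · -- x = u
      have : lidF x = if x.1.val % 2 = 0 then 1 else 2 := by
        unfold lidF; rw [if_neg (by omega)]
      rw [this] at hfx
      rw [hc] at hfx
      split_ifs at hfx <;> exact absurd hfx (by decide)
    · have hadj : G.Adj u x := hx
      have h0 : lidF x = 0 := lidF_neighbor_zero hm hn hu hadj
      rw [h0] at hfx
      rw [hc] at hfx
      split_ifs at hfx <;> exact absurd hfx (by decide)
  have hcin : c ∈ lidF '' G.closedNbhd w := by
    rcases (boxProd_adj).mp h with ⟨h1, h2⟩ | ⟨h1, h2⟩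
    · -- first coords adjacent, second equal: take x = (w.1, w.2 + 1)
      refine ⟨(w.1, w.2 + 1), Set.mem_insert_of_mem _ (boxProd_adj.mpr (Or.inr ⟨adj_succ h2n w.2, rfl⟩)), ?_⟩
      have hp1 : (u.1.val + w.1.val) % 2 = 1 := adj_parity hm h1
      have hp2 : (w.2 + 1).val % 2 = (w.2.val + 1) % 2 := val_add_one_parity hn h2n w.2
      unfold lidF
      simp only
      rw [if_neg (by omega), hc]
      by_cases hpar : u.1.val % 2 = 0
      · rw [if_pos hpar, if_neg (by omega)]
      · rw [if_neg hpar, if_pos (by omega)]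
    · -- second coords adjacent, first equal: take x = (w.1 + 1, w.2)
      refine ⟨(w.1 + 1, w.2), Set.mem_insert_of_mem _ (boxProd_adj.mpr (Or.inl ⟨adj_succ h2m w.1, rfl⟩)), ?_⟩
      have hp1 : (w.1 + 1).val % 2 = (w.1.val + 1) % 2 := val_add_one_parity hm h2m w.1
      have h2' : u.1.val = w.1.val := by rw [h2]
      unfold lidF
      simp only
      rw [if_neg (by omega), hc]
      by_cases hpar : u.1.val % 2 = 0
      · rw [if_pos hpar, if_neg (by omega)]
      · rw [if_neg hpar, if_pos (by omega)]
  intro heq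
  rw [heq] at hcnot
  exact hcnot hcin

lemma lid3 (hm : Even m) (hn : Even n) (h2m : 2 ≤ m) (h2n : 2 ≤ n) :
    (cycleGraph m □ cycleGraph n).IsLidColoring (lidF) := by
  constructor
  · exact fun u w h => lidF_proper hm hn h
  · intro u w h _
    by_cases hu : (u.1.val + u.2.val) % 2 = 0
    · exact oneSide hm hn h2m h2n h hu
    · have hw : (w.1.val + w.2.val) % 2 = 0 := by
        have := box_parity_flip hm hn h; omega
      exact (oneSide hm hn h2m h2n h.symm hw).symm

end

lemma fin_one_ne_zero' {m : ℕ} [NeZero m] (h2 : 2 ≤ m) : (1 : Fin m) ≠ 0 := by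
  simp [Fin.ext_iff, Fin.val_one']
  omega

lemma not_small {m n : ℕ} (h4 : 4 ≤ m) (h4n : 4 ≤ n) (k : ℕ)
    (hk : (cycleGraph m □ cycleGraph n).LidColorable k) : 3 ≤ k := by
  haveI : NeZero m := ⟨by omega⟩
  haveI : NeZero n := ⟨by omega⟩
  obtain ⟨f, hf1, hf2⟩ := hk
  set G := cycleGraph m □ cycleGraph n with hG
  have hadjn : (cycleGraph n).Adj 0 1 := by
    simpa using adj_succ (by omega) (0 : Fin n)
  have hadjm : (cycleGraph m).Adj 0 1 := by
    simpa using adj_succ (by omega) (0 : Fin m)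
  have hadj : G.Adj (0, 0) ((0 : Fin m), (1 : Fin n)) := boxProd_adj.mpr (Or.inr ⟨hadjn, rfl⟩)
  have hadjz : G.Adj (0, 0) ((1 : Fin m), (0 : Fin n)) := boxProd_adj.mpr (Or.inl ⟨hadjm, rfl⟩)
  have hN : G.closedNbhd ((0 : Fin m), (0 : Fin n)) ≠ G.closedNbhd ((0 : Fin m), (1 : Fin n)) := by
    intro he
    have hzin : ((1 : Fin m), (0 : Fin n)) ∈ G.closedNbhd ((0 : Fin m), (0 : Fin n)) :=
      Set.mem_insert_of_mem _ hadjz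
    rw [he] at hzin
    rcases hzin with hzw | hzw
    · exact fin_one_ne_zero' (by omega : 2 ≤ m) (congrArg Prod.fst hzw)
    · rcases boxProd_adj.mp hzw with ⟨_, h2⟩ | ⟨_, h2⟩
      · exact fin_one_ne_zero' (by omega : 2 ≤ n) (show (1 : Fin n) = 0 from h2)
      · exact fin_one_ne_zero' (by omega : 2 ≤ m) (show (1 : Fin m) = 0 from h2.symm)
  by_contra hk3
  push_neg at hk3
  interval_cases k
  · exact (f (0, 0)).elim0
  · exact hf1 hadj (Subsingleton.elim _ _)
  · set u : Fin m × Fin n := (0, 0) with hu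
    set w : Fin m × Fin n := ((0 : Fin m), (1 : Fin n)) with hwdef
    have hne : f u ≠ f w := hf1 hadj
    have key : ∀ c : Fin 2, c = f u ∨ c = f w := by
      intro c
      by_cases h : c = f u
      · exact Or.inl h
      · refine Or.inr (Fin.ext ?_)
        have h1 := c.isLt
        have h2 := (f u).isLt
        have h3 := (f w).isLt
        have h4' : (f u).val ≠ (f w).val := fun hh => hne (Fin.ext hh)
        have h5 : c.val ≠ (f u).val := fun hh => h (Fin.ext hh)
        omega
    have hU : f '' G.closedNbhd u = Set.univ := by
      apply Set.eq_univ_of_forall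
      intro c
      rcases key c with rfl | rfl
      · exact ⟨u, Set.mem_insert _ _, rfl⟩
      · exact ⟨w, Set.mem_insert_of_mem _ hadj, rfl⟩
    have hW : f '' G.closedNbhd w = Set.univ := by
      apply Set.eq_univ_of_forall
      intro c
      rcases key c with rfl | rfl
      · exact ⟨u, Set.mem_insert_of_mem _ hadj.symm, rfl⟩
      · exact ⟨w, Set.mem_insert _ _, rfl⟩
    exact hf2 hadj hN (hU.trans hW.symm)

/-- For even `m`, `n` with `4 ≤ m ≤ n`, `χ_lid(C_m □ C_n) = 3`. -/
theorem lid_stmt_5 (m n : ℕ) (hm : Even m) (hn : Even n) (h4 : 4 ≤ m) (hmn : m ≤ n) :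
    (cycleGraph m □ cycleGraph n).lidChromaticNumber = 3 := by
  have h4n : 4 ≤ n := le_trans h4 hmn
  have h3 : (cycleGraph m □ cycleGraph n).LidColorable 3 :=
    ⟨lidF, lid3 hm hn (by omega) (by omega)⟩
  rw [SimpleGraph.lidChromaticNumber]
  apply le_antisymm
  · have := iInf₂_le (f := fun (k : ℕ) (_ : k ∈ {k : ℕ | (cycleGraph m □ cycleGraph n).LidColorable k}) => (k : ℕ∞)) 3 h3
    simpa using this
  · refine le_iInf₂ fun k hk => ?_
    have := not_small h4 h4n k hk
    exact_mod_cast this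
end

section
/- Let m, n ≥ 3 be integers such that at least one of m and n is odd. Then the lid-chromatic number of the Cartesian product of the cycles C_m and C_n satisfies χ_lid(C_m □ C_n) ≥ 4. -/
open SimpleGraph

lemma cycle_adj_succ {m : ℕ} [NeZero m] (hm : 3 ≤ m) (a : Fin m) :
    (cycleGraph m).Adj a (a + 1) := by
  rw [cycleGraph_adj']
  right
  rw [add_sub_cancel_left, Fin.val_one']
  exact Nat.mod_eq_of_lt (by omega)

open Fin.CommRing in
lemma no2col {m : ℕ} (hm : 3 ≤ m) (hodd : Odd m) (c : Fin m → Fin 2)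
    (h : ∀ u v, (cycleGraph m).Adj u v → c u ≠ c v) : False := by
  haveI : NeZero m := ⟨by omega⟩
  have fin2 : ∀ x y : Fin 2, x ≠ y → x = y + 1 := by decide
  have key : ∀ k : ℕ, c (k : Fin m) = c 0 + (k : Fin 2) := by
    intro k
    induction k with
    | zero => simp
    | succ k ih =>
      have h1 : ((k + 1 : ℕ) : Fin m) = (k : Fin m) + 1 := by push_cast; ring
      have h2 := fin2 _ _ (h _ _ (cycle_adj_succ hm (k : Fin m)).symm)
      rw [h1, h2, ih]
      push_cast
      ring
  have hkey := key m
  rw [Fin.natCast_self] at hkey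
  have hm2 : (m : Fin 2) = 0 := (left_eq_add).mp hkey
  have hv : (m : Fin 2).val = m % 2 := Fin.val_natCast m 2
  rw [hm2, Nat.odd_iff.mp hodd] at hv
  simp at hv

lemma mem_closedNbhd_self {V : Type*} (G : SimpleGraph V) (v : V) : v ∈ G.closedNbhd v :=
  Set.mem_insert _ _

lemma mem_closedNbhd_of_adj {V : Type*} {G : SimpleGraph V} {u v : V} (h : G.Adj u v) :
    v ∈ G.closedNbhd u :=
  Set.mem_insert_of_mem _ h

lemma closedNbhd_ne {m n : ℕ} (hm : 3 ≤ m) (hn : 3 ≤ n) {u v : Fin m × Fin n}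
    (huv : (cycleGraph m □ cycleGraph n).Adj u v) :
    (cycleGraph m □ cycleGraph n).closedNbhd u ≠ (cycleGraph m □ cycleGraph n).closedNbhd v := by
  haveI : NeZero m := ⟨by omega⟩
  haveI : NeZero n := ⟨by omega⟩
  rw [boxProd_adj] at huv
  rcases huv with ⟨h1, h2⟩ | ⟨h1, h2⟩
  · have hadj2 : (cycleGraph n).Adj u.2 (u.2 + 1) := cycle_adj_succ hn u.2
    have hwu : (cycleGraph m □ cycleGraph n).Adj u (u.1, u.2 + 1) := by
      rw [boxProd_adj]; right; exact ⟨hadj2, rfl⟩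
    intro h
    have hw2 : (u.1, u.2 + 1) ∈ (cycleGraph m □ cycleGraph n).closedNbhd v :=
      h ▸ mem_closedNbhd_of_adj hwu
    rcases hw2 with heq | hadj
    · exact h1.ne (by rw [← heq])
    · rw [SimpleGraph.mem_neighborSet, boxProd_adj] at hadj
      rcases hadj with ⟨_, h4⟩ | ⟨_, h4⟩
      · exact hadj2.ne (h2.trans h4)
      · exact h1.ne' h4
  · have hadj2 : (cycleGraph m).Adj u.1 (u.1 + 1) := cycle_adj_succ hm u.1
    have hwu : (cycleGraph m □ cycleGraph n).Adj u (u.1 + 1, u.2) := by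
      rw [boxProd_adj]; left; exact ⟨hadj2, rfl⟩
    intro h
    have hw2 : (u.1 + 1, u.2) ∈ (cycleGraph m □ cycleGraph n).closedNbhd v :=
      h ▸ mem_closedNbhd_of_adj hwu
    rcases hw2 with heq | hadj
    · exact h1.ne (by rw [← heq])
    · rw [SimpleGraph.mem_neighborSet, boxProd_adj] at hadj
      rcases hadj with ⟨_, h4⟩ | ⟨_, h4⟩
      · exact h1.ne' h4
      · exact hadj2.ne (h2.trans h4)

lemma notLid3 (m n : ℕ) (hm : 3 ≤ m) (hn : 3 ≤ n) (hodd : Odd m ∨ Odd n) :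
    ¬ (cycleGraph m □ cycleGraph n).LidColorable 3 := by
  haveI : NeZero m := ⟨by omega⟩
  haveI : NeZero n := ⟨by omega⟩
  rintro ⟨f, hp, hlid⟩
  classical
  set G := cycleGraph m □ cycleGraph n with hG
  have hmemu : ∀ v, f v ∈ f '' G.closedNbhd v := fun v => ⟨v, mem_closedNbhd_self G v, rfl⟩
  have hmemadj : ∀ u v, G.Adj u v → f v ∈ f '' G.closedNbhd u :=
    fun u v h => ⟨v, mem_closedNbhd_of_adj h, rfl⟩
  have fin3a : ∀ a b p q : Fin 3, p ≠ q → a ≠ p → a ≠ q → b ≠ p → b ≠ q → a = b := by decide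
  have fin3b : ∀ x a p q : Fin 3, p ≠ q → a ≠ p → a ≠ q → x ≠ a → x = p ∨ x = q := by decide
  have hstep : ∀ u v, G.Adj u v →
      ((f '' G.closedNbhd u = Set.univ) ↔ ¬ (f '' G.closedNbhd v = Set.univ)) := by
    intro u v huv
    have hne := closedNbhd_ne hm hn huv
    have himg := hlid huv hne
    have hfu : f u ≠ f v := hp huv
    constructor
    · intro h1 h2; exact himg (h1.trans h2.symm)
    · intro h2
      by_contra h1
      obtain ⟨a, ha⟩ := (Set.ne_univ_iff_exists_notMem _).mp h1
      obtain ⟨b, hb⟩ := (Set.ne_univ_iff_exists_notMem _).mp h2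
      have hau : a ≠ f u := fun e => ha (e ▸ hmemu u)
      have hav : a ≠ f v := fun e => ha (e ▸ hmemadj u v huv)
      have hbu : b ≠ f u := fun e => hb (e ▸ hmemadj v u huv.symm)
      have hbv : b ≠ f v := fun e => hb (e ▸ hmemu v)
      have hab : a = b := fin3a a b (f u) (f v) hfu hau hav hbu hbv
      apply himg
      ext x
      constructor
      · intro hx
        have hxa : x ≠ a := fun e => ha (e ▸ hx)
        rcases fin3b x a (f u) (f v) hfu hau hav hxa with h | h
        · exact h ▸ hmemadj v u huv.symm
        · exact h ▸ hmemu v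
      · intro hx
        have hxb : x ≠ b := fun e => hb (e ▸ hx)
        rcases fin3b x b (f u) (f v) hfu hbu hbv hxb with h | h
        · exact h ▸ hmemu u
        · exact h ▸ hmemadj u v huv
  rcases hodd with ho | ho
  · refine no2col hm ho
      (fun i => if f '' G.closedNbhd (i, (0 : Fin n)) = Set.univ then 0 else 1) ?_
    intro i j hij
    have hadj : G.Adj (i, (0 : Fin n)) (j, (0 : Fin n)) := by
      rw [hG, boxProd_adj]; left; exact ⟨hij, rfl⟩
    have hs := hstep _ _ hadj
    by_cases h1 : f '' G.closedNbhd (i, (0 : Fin n)) = Set.univ <;>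
      by_cases h2 : f '' G.closedNbhd (j, (0 : Fin n)) = Set.univ <;>
      simp only [h1, h2, if_true, if_false, if_pos, if_neg, ne_eq]
    · exact absurd h2 (hs.mp h1)
    · decide
    · decide
    · exact absurd (hs.mpr h2) h1
  · refine no2col hn ho
      (fun i => if f '' G.closedNbhd ((0 : Fin m), i) = Set.univ then 0 else 1) ?_
    intro i j hij
    have hadj : G.Adj ((0 : Fin m), i) ((0 : Fin m), j) := by
      rw [hG, boxProd_adj]; right; exact ⟨hij, rfl⟩
    have hs := hstep _ _ hadj
    by_cases h1 : f '' G.closedNbhd ((0 : Fin m), i) = Set.univ <;>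
      by_cases h2 : f '' G.closedNbhd ((0 : Fin m), j) = Set.univ <;>
      simp only [h1, h2, if_true, if_false, if_pos, if_neg, ne_eq]
    · exact absurd h2 (hs.mp h1)
    · decide
    · decide
    · exact absurd (hs.mpr h2) h1

lemma lid_mono {V : Type*} (G : SimpleGraph V) {j k : ℕ} (h : j ≤ k) :
    G.LidColorable j → G.LidColorable k := by
  rintro ⟨f, hp, hl⟩
  refine ⟨Fin.castLE h ∘ f, fun u w hadj e => hp hadj (Fin.castLE_injective h e), ?_⟩
  intro u w hadj hne e
  exact hl hadj hne ((Set.image_eq_image (Fin.castLE_injective h)).mp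
    (by rwa [Set.image_comp, Set.image_comp] at e))

/-- If `m, n ≥ 3` and at least one of them is odd, then `χ_lid(C_m □ C_n) ≥ 4`. -/
theorem lid_stmt_6 (m n : ℕ) (hm : 3 ≤ m) (hn : 3 ≤ n) (hodd : Odd m ∨ Odd n) :
    4 ≤ (cycleGraph m □ cycleGraph n).lidChromaticNumber := by
  rw [SimpleGraph.lidChromaticNumber]
  refine le_iInf₂ fun k hk => ?_
  have h4 : 4 ≤ k := by
    by_contra h
    push_neg at h
    exact notLid3 m n hm hn hodd (lid_mono _ (by omega) hk)
  exact_mod_cast h4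
end

section
/- Let m ≥ 5 be an odd integer and n ≥ 4 be an even integer. Then the lid-chromatic number of the Cartesian product of the cycles C_m and C_n satisfies χ_lid(C_m □ C_n) = 4. -/
open SimpleGraph

namespace LidAux

open Fin.CommRing


def A : ℕ → Fin 4 := fun k =>
  if k = 0 then 0 else if k = 1 then 1 else if k = 2 then 3 else if k % 2 = 1 then 0 else 2
def B : ℕ → Fin 4 := fun k =>
  if k = 0 then 1 else if k = 1 then 2 else if k = 2 then 0 else if k % 2 = 1 then 1 else 3
def R : ℕ → Fin 4 × Fin 4 := fun k => (A k, B k)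

lemma R0 : R 0 = (0,1) := rfl
lemma R1 : R 1 = (1,2) := rfl
lemma R2 : R 2 = (3,0) := rfl
lemma Rodd (k : ℕ) (h3 : 3 ≤ k) (h : k % 2 = 1) : R k = (0,1) := by
  have h0 : k ≠ 0 := by omega
  have h1 : k ≠ 1 := by omega
  have h2 : k ≠ 2 := by omega
  simp [R, A, B, h0, h1, h2, h]
lemma Reven (k : ℕ) (h3 : 3 ≤ k) (h : k % 2 = 0) : R k = (2,3) := by
  have h0 : k ≠ 0 := by omega
  have h1 : k ≠ 1 := by omega
  have h2 : k ≠ 2 := by omega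
  simp [R, A, B, h0, h1, h2, h]

lemma val_add_one {m : ℕ} (i : Fin (m+2)) : (i+1).val = (i.val+1) % (m+2) := by
  rw [Fin.add_def]; norm_num
lemma val_sub_one {m : ℕ} (i : Fin (m+2)) : (i-1).val = ((m+1) + i.val) % (m+2) := by
  rw [Fin.sub_def]; norm_num


lemma mod_helper {M x r : ℕ} (h : x = r ∨ x = (M+2) + r) (hr : r < M+2) : x % (M+2) = r := by
  rcases h with rfl | rfl
  · exact Nat.mod_eq_of_lt hr
  · simp [Nat.add_mod_left, Nat.mod_eq_of_lt hr]

/-- classification of 4-windows of rows -/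
lemma WIN {M : ℕ} (hM : 3 ≤ M) (ho : M % 2 = 1) (i : Fin (M+2)) :
    (R (i-1).val, R i.val, R (i+1).val, R (i+1+1).val) ∈
    ([((2,3),(0,1),(1,2),(3,0)), ((0,1),(1,2),(3,0),(0,1)), ((1,2),(3,0),(0,1),(2,3)),
      ((3,0),(0,1),(2,3),(0,1)), ((0,1),(2,3),(0,1),(2,3)), ((2,3),(0,1),(2,3),(0,1)),
      ((0,1),(2,3),(0,1),(1,2))] :
      List ((Fin 4 × Fin 4) × (Fin 4 × Fin 4) × (Fin 4 × Fin 4) × (Fin 4 × Fin 4))) := by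
  have hi : i.val < M+2 := i.isLt
  have e1 : (i+1).val = (i.val+1) % (M+2) := val_add_one i
  have e2 : (i+1+1).val = ((i.val+1) % (M+2) + 1) % (M+2) := by rw [val_add_one (i+1), e1]
  have e0 : (i-1).val = ((M+1) + i.val) % (M+2) := val_sub_one i
  simp only [List.mem_cons, List.mem_singleton, List.not_mem_nil, or_false]
  have hcase : i.val = 0 ∨ i.val = 1 ∨ i.val = 2 ∨ i.val = 3 ∨
      (4 ≤ i.val ∧ i.val % 2 = 0 ∧ i.val < M+1) ∨ (i.val = M+1) ∨
      (5 ≤ i.val ∧ i.val % 2 = 1) := by omega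
  rcases hcase with hv | hv | hv | hv | ⟨hv4, hv2, hvlt⟩ | hv | ⟨hv5, hv2⟩
  · rw [e0, e1, e2, hv, mod_helper (x := M+1+0) (r := M+1) (by omega) (by omega),
      mod_helper (x := 0+1) (r := 1) (by omega) (by omega), mod_helper (x := 1+1) (r := 2) (by omega) (by omega),
      Reven (M+1) (by omega) (by omega), R0, R1, R2]
    tauto
  · rw [e0, e1, e2, hv, mod_helper (x := M+1+1) (r := 0) (by omega) (by omega), mod_helper (x := 1+1) (r := 2) (by omega) (by omega),
      mod_helper (x := 2+1) (r := 3) (by omega) (by omega), R0, R1, R2, Rodd 3 (by omega) (by omega)]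
    tauto
  · rw [e0, e1, e2, hv, mod_helper (x := M+1+2) (r := 1) (by omega) (by omega), mod_helper (x := 2+1) (r := 3) (by omega) (by omega),
      mod_helper (x := 3+1) (r := 4) (by omega) (by omega), R1, R2, Rodd 3 (by omega) (by omega),
      Reven 4 (by omega) (by omega)]
    tauto
  · rcases Nat.lt_or_ge 5 (M+2) with h | h
    · rw [e0, e1, e2, hv, mod_helper (x := M+1+3) (r := 2) (by omega) (by omega), mod_helper (x := 3+1) (r := 4) (by omega) (by omega),
        mod_helper (x := 4+1) (r := 5) (by omega) (by omega), R2, Rodd 3 (by omega) (by omega),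
        Reven 4 (by omega) (by omega), Rodd 5 (by omega) (by omega)]
      tauto
    · rw [e0, e1, e2, hv, mod_helper (x := M+1+3) (r := 2) (by omega) (by omega), mod_helper (x := 3+1) (r := 4) (by omega) (by omega),
        mod_helper (x := 4+1) (r := 0) (by omega) (by omega), R2, Rodd 3 (by omega) (by omega),
        Reven 4 (by omega) (by omega), R0]
      tauto
  · rw [e0, e1, e2, mod_helper (x := M+1+i.val) (r := i.val - 1) (by omega) (by omega),
      mod_helper (x := i.val+1) (r := i.val+1) (by omega) (by omega),
      mod_helper (x := i.val+1+1) (r := i.val+2) (by omega) (by omega),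
      Rodd (i.val-1) (by omega) (by omega), Reven i.val (by omega) (by omega),
      Rodd (i.val+1) (by omega) (by omega), Reven (i.val+2) (by omega) (by omega)]
    tauto
  · rw [e0, e1, e2, hv, mod_helper (x := M+1+(M+1)) (r := M) (by omega) (by omega),
      mod_helper (x := M+1+1) (r := 0) (by omega) (by omega), mod_helper (x := 0+1) (r := 1) (by omega) (by omega),
      Rodd M (by omega) (by omega), Reven (M+1) (by omega) (by omega), R0, R1]
    tauto
  · rcases Nat.lt_or_ge (i.val+1) (M+2) with h | h
    · rcases Nat.lt_or_ge (i.val+2) (M+2) with h' | h'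
      · rw [e0, e1, e2, mod_helper (x := M+1+i.val) (r := i.val - 1) (by omega) (by omega),
          mod_helper (x := i.val+1) (r := i.val+1) (by omega) (by omega),
          mod_helper (x := i.val+1+1) (r := i.val+2) (by omega) (by omega),
          Reven (i.val-1) (by omega) (by omega), Rodd i.val (by omega) (by omega),
          Reven (i.val+1) (by omega) (by omega), Rodd (i.val+2) (by omega) (by omega)]
        tauto
      · rw [e0, e1, e2, mod_helper (x := M+1+i.val) (r := i.val - 1) (by omega) (by omega),
          mod_helper (x := i.val+1) (r := i.val+1) (by omega) (by omega),
          mod_helper (x := i.val+1+1) (r := 0) (by omega) (by omega),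
          Reven (i.val-1) (by omega) (by omega), Rodd i.val (by omega) (by omega),
          Reven (i.val+1) (by omega) (by omega), R0]
        tauto
    · exfalso; omega

def Ef {M : ℕ} (i : Fin (M+2)) : Finset (Fin 4) :=
  {A i.val, B i.val, A (i-1).val, A (i+1).val}
def Of {M : ℕ} (i : Fin (M+2)) : Finset (Fin 4) :=
  {A i.val, B i.val, B (i-1).val, B (i+1).val}

lemma key {M : ℕ} (hM : 3 ≤ M) (ho : M % 2 = 1) (i : Fin (M+2)) :
    A i.val ≠ B i.val ∧ A i.val ≠ A (i+1).val ∧ B i.val ≠ B (i+1).val ∧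
    Ef i ≠ Of i ∧ Ef i ≠ Ef (i+1) ∧ Of i ≠ Of (i+1) := by
  have hw := WIN hM ho i
  simp only [List.mem_cons, List.not_mem_nil, or_false] at hw
  unfold Ef Of
  rw [show (i+1)-1 = i by ring]
  rcases hw with h|h|h|h|h|h|h <;>
  · simp only [R, Prod.mk.injEq] at h
    obtain ⟨⟨a1,b1⟩,⟨a2,b2⟩,⟨a3,b3⟩,a4,b4⟩ := h
    rw [a1,b1,a2,b2,a3,b3,a4,b4]
    refine ⟨by decide, by decide, by decide, by decide, by decide, by decide⟩

lemma boxCycle_nbhd (M N : ℕ) (u : Fin (M+2) × Fin (N+2)) :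
    (cycleGraph (M+2) □ cycleGraph (N+2)).closedNbhd u =
    {u, (u.1 - 1, u.2), (u.1 + 1, u.2), (u.1, u.2 - 1), (u.1, u.2 + 1)} := by
  ext ⟨x, y⟩
  simp only [SimpleGraph.closedNbhd, Set.mem_insert_iff, neighborSet_boxProd,
    cycleGraph_neighborSet, Set.mem_union, Set.mem_prod, Set.mem_insert_iff,
    Set.mem_singleton_iff, Prod.ext_iff]
  tauto

def F (M N : ℕ) : Fin (M+2) × Fin (N+2) → Fin 4 :=
  fun v => if v.2.val % 2 = 0 then A v.1.val else B v.1.val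

lemma parity_add {N : ℕ} (hN : N % 2 = 0) (j : Fin (N+2)) :
    (j+1).val % 2 = (j.val + 1) % 2 := by
  rw [val_add_one, Nat.mod_mod_of_dvd _ (by omega : 2 ∣ N+2)]

lemma parity_sub {N : ℕ} (hN : N % 2 = 0) (j : Fin (N+2)) :
    (j-1).val % 2 = (j.val + 1) % 2 := by
  rw [val_sub_one, Nat.mod_mod_of_dvd _ (by omega : 2 ∣ N+2)]
  omega

lemma image_nbhd (M N : ℕ) (hN : N % 2 = 0) (i : Fin (M+2)) (j : Fin (N+2)) :
    F M N '' ((cycleGraph (M+2) □ cycleGraph (N+2)).closedNbhd (i,j)) =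
    ↑(if j.val % 2 = 0 then Ef i else Of i) := by
  rw [boxCycle_nbhd, Set.image_insert_eq, Set.image_insert_eq, Set.image_insert_eq,
    Set.image_insert_eq, Set.image_singleton]
  have hp1 : (j+1).val % 2 = (j.val + 1) % 2 := parity_add hN j
  have hp0 : (j-1).val % 2 = (j.val + 1) % 2 := parity_sub hN j
  rcases Nat.mod_two_eq_zero_or_one j.val with hj | hj
  · rw [if_pos hj]
    have h1 : (j.val + 1) % 2 = 1 := by omega
    simp only [F, hj, hp0, hp1, h1, if_pos, reduceIte]
    apply Set.ext; intro c
    simp [Ef, Set.mem_insert_iff, Finset.coe_insert]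
    tauto
  · rw [if_neg (by omega)]
    have h1 : (j.val + 1) % 2 = 0 := by omega
    simp only [F, hj, hp0, hp1, h1, if_pos, reduceIte]
    apply Set.ext; intro c
    simp [Of, Set.mem_insert_iff, Finset.coe_insert]
    tauto

lemma upper (M N : ℕ) (hM : 3 ≤ M) (ho : M % 2 = 1) (hN : N % 2 = 0) :
    (cycleGraph (M+2) □ cycleGraph (N+2)).IsLidColoring (F M N) := by
  have hor : ∀ (i : Fin (M+2)) (j : Fin (N+2)), F M N (i,j) ≠ F M N (i+1,j) := by
    intro i j
    obtain ⟨k1, k2, k3, _⟩ := key hM ho i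
    simp only [F]
    split
    · exact k2
    · exact k3
  have vert : ∀ (i : Fin (M+2)) (j : Fin (N+2)), F M N (i,j) ≠ F M N (i,j+1) := by
    intro i j
    obtain ⟨k1, _⟩ := key hM ho i
    have hp1 : (j+1).val % 2 = (j.val + 1) % 2 := parity_add hN j
    simp only [F]
    rcases Nat.mod_two_eq_zero_or_one j.val with hj | hj
    · rw [if_pos hj, if_neg (by omega)]; exact k1
    · rw [if_neg (by omega), if_pos (by omega)]; exact k1.symm
  have horN : ∀ (i : Fin (M+2)) (j : Fin (N+2)),
      F M N '' ((cycleGraph (M+2) □ cycleGraph (N+2)).closedNbhd (i,j)) ≠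
      F M N '' ((cycleGraph (M+2) □ cycleGraph (N+2)).closedNbhd (i+1,j)) := by
    intro i j
    obtain ⟨k1, k2, k3, k4, k5, k6⟩ := key hM ho i
    rw [image_nbhd M N hN, image_nbhd M N hN]
    rcases Nat.mod_two_eq_zero_or_one j.val with hj | hj
    · rw [if_pos hj, if_pos hj]
      exact fun h => k5 (Finset.coe_inj.mp h)
    · rw [if_neg (by omega), if_neg (by omega)]
      exact fun h => k6 (Finset.coe_inj.mp h)
  have vertN : ∀ (i : Fin (M+2)) (j : Fin (N+2)),
      F M N '' ((cycleGraph (M+2) □ cycleGraph (N+2)).closedNbhd (i,j)) ≠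
      F M N '' ((cycleGraph (M+2) □ cycleGraph (N+2)).closedNbhd (i,j+1)) := by
    intro i j
    obtain ⟨k1, k2, k3, k4, k5, k6⟩ := key hM ho i
    have hp1 : (j+1).val % 2 = (j.val + 1) % 2 := parity_add hN j
    rw [image_nbhd M N hN, image_nbhd M N hN]
    rcases Nat.mod_two_eq_zero_or_one j.val with hj | hj
    · rw [if_pos hj, if_neg (by omega)]
      exact fun h => k4 (Finset.coe_inj.mp h)
    · rw [if_neg (by omega), if_pos (by omega)]
      exact fun h => k4 (Finset.coe_inj.mp h.symm)
  constructor
  · rintro ⟨i,j⟩ ⟨i',j'⟩ hadj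
    rw [boxProd_adj] at hadj
    rcases hadj with ⟨hii, rfl⟩ | ⟨hjj, heq⟩
    · rw [cycleGraph_adj] at hii
      rcases hii with h | h
      · rw [show i = i' + 1 by rw [← h]; ring]
        exact (hor i' j).symm
      · rw [show i' = i + 1 by rw [← h]; ring]
        exact hor i j
    · obtain rfl : i = i' := heq
      rw [cycleGraph_adj] at hjj
      rcases hjj with h | h
      · rw [show j = j' + 1 by rw [← h]; ring]
        exact (vert i j').symm
      · rw [show j' = j + 1 by rw [← h]; ring]
        exact vert i j
  · rintro ⟨i,j⟩ ⟨i',j'⟩ hadj -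
    rw [boxProd_adj] at hadj
    rcases hadj with ⟨hii, rfl⟩ | ⟨hjj, heq⟩
    · rw [cycleGraph_adj] at hii
      rcases hii with h | h
      · rw [show i = i' + 1 by rw [← h]; ring]
        exact (horN i' j).symm
      · rw [show i' = i + 1 by rw [← h]; ring]
        exact horN i j
    · obtain rfl : i = i' := heq
      rw [cycleGraph_adj] at hjj
      rcases hjj with h | h
      · rw [show j = j' + 1 by rw [← h]; ring]
        exact (vertN i j').symm
      · rw [show j' = j + 1 by rw [← h]; ring]
        exact vertN i j

lemma cast_ne_zero {k : ℕ} [NeZero k] {c : ℕ} (hc : ¬ k ∣ c) : ((c : ℕ) : Fin k) ≠ 0 :=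
  fun h => hc (Fin.natCast_eq_zero.mp h)

lemma not_dvd_small {k c : ℕ} (h1 : 0 < c) (h2 : c < k) : ¬ k ∣ c :=
  fun hd => absurd (Nat.le_of_dvd h1 hd) (by omega)

lemma lower (M N : ℕ) (hM : 3 ≤ M) (ho : M % 2 = 1) (hN2 : 2 ≤ N) :
    ¬ (cycleGraph (M+2) □ cycleGraph (N+2)).LidColorable 3 := by
  rintro ⟨f, hprop, hlid⟩
  set G := cycleGraph (M+2) □ cycleGraph (N+2) with hG
  -- adjacency of consecutive rows
  have adj : ∀ i : Fin (M+2), G.Adj (i, (0:Fin (N+2))) (i+1, 0) := by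
    intro i
    rw [hG, boxProd_adj]
    exact Or.inl ⟨cycleGraph_adj.mpr (Or.inr (by ring)), rfl⟩
  -- distinct closed neighborhoods
  have hdiff : ∀ i : Fin (M+2), G.closedNbhd (i, (0:Fin (N+2))) ≠ G.closedNbhd (i+1, 0) := by
    intro i h
    have hmem : ((i-1 : Fin (M+2)), (0:Fin (N+2))) ∈ G.closedNbhd (i, (0:Fin (N+2))) := by
      rw [hG, boxCycle_nbhd]
      right; left; rfl
    rw [h, hG, boxCycle_nbhd] at hmem
    simp only [Set.mem_insert_iff, Set.mem_singleton_iff, Prod.mk.injEq] at hmem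
    rcases hmem with ⟨h1, _⟩ | ⟨h1, _⟩ | ⟨h1, _⟩ | ⟨_, h2⟩ | ⟨_, h2⟩
    · exact cast_ne_zero (k := M+2) (c := 2) (not_dvd_small (by omega) (by omega))
        (by have : (i+1) - (i-1) = ((2:ℕ) : Fin (M+2)) := by push_cast; ring
            rw [← this, ← h1]; ring)
    · exact cast_ne_zero (k := M+2) (c := 1) (not_dvd_small (by omega) (by omega))
        (by have : (i+1-1) - (i-1) = ((1:ℕ) : Fin (M+2)) := by push_cast; ring
            rw [← this, h1]; ring)
    · exact cast_ne_zero (k := M+2) (c := 3) (not_dvd_small (by omega) (by omega))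
        (by have : (i+1+1) - (i-1) = ((3:ℕ) : Fin (M+2)) := by push_cast; ring
            rw [← this, ← h1]; ring)
    · exact cast_ne_zero (k := N+2) (c := 1) (not_dvd_small (by omega) (by omega))
        (by have : (0:Fin (N+2)) - (0 - 1) = ((1:ℕ) : Fin (N+2)) := by push_cast; ring
            rw [← this, ← h2]; ring)
    · exact cast_ne_zero (k := N+2) (c := 1) (not_dvd_small (by omega) (by omega))
        (by have : ((0:Fin (N+2)) + 1) - 0 = ((1:ℕ) : Fin (N+2)) := by push_cast; ring
            rw [← this, ← h2]; ring)
  -- the rainbow predicate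
  set rb : Fin (M+2) → Prop := fun i => ∀ c : Fin 3, c ∈ f '' G.closedNbhd (i, (0:Fin (N+2)))
    with hrb
  have third : ∀ p q y : Fin 3, p ≠ q → y = p ∨ y = q ∨ y = -p-q := by decide
  have step : ∀ i : Fin (M+2), rb i ↔ ¬ rb (i+1) := by
    intro i
    have hA := adj i
    have hSne := hlid hA (hdiff i)
    have hpq : f (i, (0:Fin (N+2))) ≠ f (i+1, 0) := hprop hA
    have m1 : f (i, (0:Fin (N+2))) ∈ f '' G.closedNbhd (i, (0:Fin (N+2))) :=
      Set.mem_image_of_mem f (Set.mem_insert _ _)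
    have m2 : f (i+1, (0:Fin (N+2))) ∈ f '' G.closedNbhd (i, (0:Fin (N+2))) :=
      Set.mem_image_of_mem f (Set.mem_insert_of_mem _ hA)
    have m3 : f (i, (0:Fin (N+2))) ∈ f '' G.closedNbhd (i+1, (0:Fin (N+2))) :=
      Set.mem_image_of_mem f (Set.mem_insert_of_mem _ hA.symm)
    have m4 : f (i+1, (0:Fin (N+2))) ∈ f '' G.closedNbhd (i+1, (0:Fin (N+2))) :=
      Set.mem_image_of_mem f (Set.mem_insert _ _)
    set x : Fin 3 := -f (i, (0:Fin (N+2))) - f (i+1, 0) with hx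
    have e1 : rb i ↔ x ∈ f '' G.closedNbhd (i, (0:Fin (N+2))) := by
      constructor
      · intro h; exact h x
      · intro h c
        rcases third _ _ c hpq with rfl | rfl | rfl
        · exact m1
        · exact m2
        · exact h
    have e2 : rb (i+1) ↔ x ∈ f '' G.closedNbhd (i+1, (0:Fin (N+2))) := by
      constructor
      · intro h; exact h x
      · intro h c
        rcases third _ _ c hpq with rfl | rfl | rfl
        · exact m3
        · exact m4
        · exact h
    rw [e1, e2]
    constructor
    · intro hS hT
      apply hSne
      apply Set.Subset.antisymm
      · intro y hy
        rcases third _ _ y hpq with rfl | rfl | rfl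
        · exact m3
        · exact m4
        · exact hT
      · intro y hy
        rcases third _ _ y hpq with rfl | rfl | rfl
        · exact m1
        · exact m2
        · exact hS
    · intro hT
      by_contra hS
      apply hSne
      apply Set.Subset.antisymm
      · intro y hy
        rcases third _ _ y hpq with rfl | rfl | rfl
        · exact m3
        · exact m4
        · exact absurd hy hS
      · intro y hy
        rcases third _ _ y hpq with rfl | rfl | rfl
        · exact m1
        · exact m2
        · exact absurd hy hT
  have main : ∀ k : ℕ, (rb (k : Fin (M+2)) ↔ (Even k ↔ rb 0)) := by
    intro k
    induction k with
    | zero => simp only [Nat.cast_zero]; tauto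
    | succ k ih =>
      have hc : ((k+1 : ℕ) : Fin (M+2)) = ((k : ℕ) : Fin (M+2)) + 1 := by push_cast; ring
      have := step ((k : ℕ) : Fin (M+2))
      rw [hc]
      rw [Nat.even_add_one]
      tauto
  have hfin := main (M+2)
  rw [Fin.natCast_self] at hfin
  have : ¬ Even (M+2) := by
    rw [Nat.even_iff]; omega
  tauto

lemma mono {V : Type*} {G : SimpleGraph V} {k k' : ℕ} (h : k ≤ k') :
    G.LidColorable k → G.LidColorable k' := by
  rintro ⟨f, hp, hl⟩
  refine ⟨Fin.castLE h ∘ f, fun u w a => ?_, fun u w a hnb hi => ?_⟩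
  · exact fun e => hp a (Fin.castLE_injective h e)
  · apply hl a hnb
    rw [Set.image_comp, Set.image_comp] at hi
    exact (Fin.castLE_injective h).image_injective hi

end LidAux

/-- For odd `m ≥ 5` and even `n ≥ 4`, `χ_lid(C_m □ C_n) = 4`. -/
theorem lid_stmt_7 (m n : ℕ) (hm : Odd m) (hm5 : 5 ≤ m) (hn : Even n) (hn4 : 4 ≤ n) :
    (cycleGraph m □ cycleGraph n).lidChromaticNumber = 4 := by
  obtain ⟨M, rfl⟩ : ∃ M, m = M + 2 := ⟨m - 2, by omega⟩
  obtain ⟨N, rfl⟩ : ∃ N, n = N + 2 := ⟨n - 2, by omega⟩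
  have hM : 3 ≤ M := by omega
  have hoM : M % 2 = 1 := by have := Nat.odd_iff.mp hm; omega
  have hNe : N % 2 = 0 := by have := Nat.even_iff.mp hn; omega
  have hN2 : 2 ≤ N := by omega
  have h4 : (cycleGraph (M+2) □ cycleGraph (N+2)).LidColorable 4 :=
    ⟨LidAux.F M N, LidAux.upper M N hM hoM hNe⟩
  have h3 : ¬ (cycleGraph (M+2) □ cycleGraph (N+2)).LidColorable 3 :=
    LidAux.lower M N hM hoM hN2
  unfold SimpleGraph.lidChromaticNumber
  apply le_antisymm
  · exact (iInf₂_le 4 h4).trans_eq (by norm_num)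
  · refine le_iInf₂ fun k hk => ?_
    have hk4 : 4 ≤ k := by
      by_contra hlt
      push_neg at hlt
      exact h3 (LidAux.mono (by omega) hk)
    exact_mod_cast hk4
end

section
/- For every odd integer n ≥ 5, the lid-chromatic number of the Cartesian product of the cycles C_5 and C_n satisfies χ_lid(C_5 □ C_n) = 4. -/
open SimpleGraph

/-! ### Auxiliary machinery -/

/-- The five column patterns A,B,C,D,E of the explicit lid-coloring. -/
def lidPat : Fin 5 → Fin 5 → Fin 4 :=
  ![![0,1,0,2,3], ![2,3,2,1,0], ![0,2,1,0,1], ![2,3,0,1,3], ![1,0,2,0,2]]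

/-- The type of column `k` among `n` columns. -/
def lidTyp (n k : ℕ) : Fin 5 :=
  if k+3 = n then 2 else if k+2 = n then 3 else if k+1 = n then 4
  else if k % 2 = 0 then 0 else 1

/-- The colors on the closed neighborhood of row `i` in a column colored `q` whose
neighboring columns are colored `p` and `r`. -/
def lidFS (p q r : Fin 5 → Fin 4) (i : Fin 5) : Finset (Fin 4) :=
  {q i, q (i-1), q (i+1), p i, r i}

def vtrips : List (Fin 5 × Fin 5 × Fin 5) :=
  [(4,0,1),(3,4,0),(2,3,4),(1,2,3),(0,1,2),(1,0,1),(0,1,0)]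
def htrips : List (Fin 5 × Fin 5 × Fin 5 × Fin 5) :=
  [(4,0,1,2),(4,0,1,0),(3,4,0,1),(2,3,4,0),(1,2,3,4),(0,1,2,3),(1,0,1,2),(1,0,1,0),(0,1,0,1)]

set_option maxRecDepth 8000 in
theorem vert_core : ∀ t ∈ vtrips, ∀ i : Fin 5,
    lidPat t.2.1 i ≠ lidPat t.2.1 (i+1) ∧
    lidFS (lidPat t.1) (lidPat t.2.1) (lidPat t.2.2) i ≠
      lidFS (lidPat t.1) (lidPat t.2.1) (lidPat t.2.2) (i+1) := by
  decide

set_option maxRecDepth 8000 in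
theorem horiz_core : ∀ t ∈ htrips, ∀ i : Fin 5,
    lidPat t.2.1 i ≠ lidPat t.2.2.1 i ∧
    lidFS (lidPat t.1) (lidPat t.2.1) (lidPat t.2.2.1) i ≠
      lidFS (lidPat t.2.1) (lidPat t.2.2.1) (lidPat t.2.2.2) i := by
  decide

lemma typ_eq_A {n k : ℕ} (h3 : k+3 ≠ n) (h2 : k+2 ≠ n) (h1 : k+1 ≠ n) (he : k % 2 = 0) :
    lidTyp n k = 0 := by simp [lidTyp, h3, h2, h1, he]
lemma typ_eq_B {n k : ℕ} (h3 : k+3 ≠ n) (h2 : k+2 ≠ n) (h1 : k+1 ≠ n) (he : k % 2 = 1) :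
    lidTyp n k = 1 := by simp [lidTyp, h3, h2, h1, he]
lemma typ_eq_C {n k : ℕ} (h : k+3 = n) : lidTyp n k = 2 := by simp [lidTyp, h]
lemma typ_eq_D {n k : ℕ} (h : k+2 = n) : lidTyp n k = 3 := by
  simp [lidTyp, h, show k+3 ≠ n by omega]
lemma typ_eq_E {n k : ℕ} (h : k+1 = n) : lidTyp n k = 4 := by
  simp [lidTyp, h, show k+3 ≠ n by omega, show k+2 ≠ n by omega]

lemma types_vert (m : ℕ) (hm : m % 2 = 1) (hm3 : 3 ≤ m) (j : Fin (m+2)) :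
    (lidTyp (m+2) (j-1).val, lidTyp (m+2) j.val, lidTyp (m+2) (j+1).val) ∈ vtrips := by
  have hk := j.isLt
  have ha : (j-1).val = if j.val = 0 then m+1 else j.val - 1 := by
    rw [Fin.coe_sub_one]; simp only [Fin.ext_iff, Fin.val_zero]
  have hb : (j+1).val = if j.val = m+1 then 0 else j.val + 1 := by
    rw [Fin.val_add_one]; simp [Fin.ext_iff, Fin.val_last]
  by_cases h0 : j.val = 0
  · have ha' : (j-1).val = m+1 := by rw [ha, if_pos h0]
    have hb' : (j+1).val = j.val+1 := by rw [hb, if_neg (by omega)]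
    rw [ha', hb', typ_eq_E (by omega), typ_eq_A (by omega) (by omega) (by omega) (by omega),
      typ_eq_B (by omega) (by omega) (by omega) (by omega)]
    decide
  have ha' : (j-1).val = j.val - 1 := by rw [ha, if_neg h0]
  by_cases hE : j.val+1 = m+2
  · have hb' : (j+1).val = 0 := by rw [hb, if_pos (by omega)]
    rw [ha', hb', typ_eq_D (by omega), typ_eq_E (by omega),
      typ_eq_A (by omega) (by omega) (by omega) (by omega)]
    decide
  have hb' : (j+1).val = j.val+1 := by rw [hb, if_neg (by omega)]
  rw [ha', hb']
  by_cases hD : j.val+2 = m+2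
  · rw [typ_eq_C (by omega), typ_eq_D (by omega), typ_eq_E (by omega)]
    decide
  by_cases hC : j.val+3 = m+2
  · rw [typ_eq_B (by omega) (by omega) (by omega) (by omega), typ_eq_C (by omega),
      typ_eq_D (by omega)]
    decide
  by_cases hB : j.val+4 = m+2
  · rw [typ_eq_A (by omega) (by omega) (by omega) (by omega),
      typ_eq_B (by omega) (by omega) (by omega) (by omega), typ_eq_C (by omega)]
    decide
  by_cases he : j.val % 2 = 0
  · rw [typ_eq_B (by omega) (by omega) (by omega) (by omega),
      typ_eq_A (by omega) (by omega) (by omega) he,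
      typ_eq_B (by omega) (by omega) (by omega) (by omega)]
    decide
  · rw [typ_eq_A (by omega) (by omega) (by omega) (by omega),
      typ_eq_B (by omega) (by omega) (by omega) (by omega),
      typ_eq_A (by omega) (by omega) (by omega) (by omega)]
    decide

lemma types_horiz (m : ℕ) (hm : m % 2 = 1) (hm3 : 3 ≤ m) (j : Fin (m+2)) :
    (lidTyp (m+2) (j-1).val, lidTyp (m+2) j.val, lidTyp (m+2) (j+1).val,
      lidTyp (m+2) (j+1+1).val) ∈ htrips := by
  have hk := j.isLt
  have ha : (j-1).val = if j.val = 0 then m+1 else j.val - 1 := by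
    rw [Fin.coe_sub_one]; simp only [Fin.ext_iff, Fin.val_zero]
  have hb : (j+1).val = if j.val = m+1 then 0 else j.val + 1 := by
    rw [Fin.val_add_one]; simp [Fin.ext_iff, Fin.val_last]
  have hc : (j+1+1).val = if (j+1).val = m+1 then 0 else (j+1).val + 1 := by
    rw [Fin.val_add_one]; simp [Fin.ext_iff, Fin.val_last]
  by_cases h0 : j.val = 0
  · have ha' : (j-1).val = m+1 := by rw [ha, if_pos h0]
    have hb' : (j+1).val = j.val+1 := by rw [hb, if_neg (by omega)]
    have hc' : (j+1+1).val = j.val+1+1 := by rw [hc, hb', if_neg (by omega)]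
    by_cases h5 : m = 3
    · rw [ha', hb', hc', typ_eq_E (by omega), typ_eq_A (by omega) (by omega) (by omega) (by omega),
        typ_eq_B (by omega) (by omega) (by omega) (by omega), typ_eq_C (by omega)]
      decide
    · rw [ha', hb', hc', typ_eq_E (by omega), typ_eq_A (by omega) (by omega) (by omega) (by omega),
        typ_eq_B (by omega) (by omega) (by omega) (by omega),
        typ_eq_A (by omega) (by omega) (by omega) (by omega)]
      decide
  have ha' : (j-1).val = j.val - 1 := by rw [ha, if_neg h0]
  by_cases hE : j.val+1 = m+2
  · have hb' : (j+1).val = 0 := by rw [hb, if_pos (by omega)]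
    have hc' : (j+1+1).val = 1 := by rw [hc, hb', if_neg (by omega)]
    rw [ha', hb', hc', typ_eq_D (by omega), typ_eq_E (by omega),
      typ_eq_A (by omega) (by omega) (by omega) (by omega),
      typ_eq_B (by omega) (by omega) (by omega) (by omega)]
    decide
  have hb' : (j+1).val = j.val+1 := by rw [hb, if_neg (by omega)]
  by_cases hD : j.val+2 = m+2
  · have hc' : (j+1+1).val = 0 := by rw [hc, hb', if_pos (by omega)]
    rw [ha', hb', hc', typ_eq_C (by omega), typ_eq_D (by omega), typ_eq_E (by omega),
      typ_eq_A (by omega) (by omega) (by omega) (by omega)]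
    decide
  have hc' : (j+1+1).val = j.val+1+1 := by rw [hc, hb', if_neg (by omega)]
  rw [ha', hb', hc']
  by_cases hC : j.val+3 = m+2
  · rw [typ_eq_B (by omega) (by omega) (by omega) (by omega), typ_eq_C (by omega),
      typ_eq_D (by omega), typ_eq_E (by omega)]
    decide
  by_cases hB : j.val+4 = m+2
  · rw [typ_eq_A (by omega) (by omega) (by omega) (by omega),
      typ_eq_B (by omega) (by omega) (by omega) (by omega), typ_eq_C (by omega),
      typ_eq_D (by omega)]
    decide
  by_cases hA : j.val+5 = m+2
  · rw [typ_eq_B (by omega) (by omega) (by omega) (by omega),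
      typ_eq_A (by omega) (by omega) (by omega) (by omega),
      typ_eq_B (by omega) (by omega) (by omega) (by omega), typ_eq_C (by omega)]
    decide
  by_cases he : j.val % 2 = 0
  · rw [typ_eq_B (by omega) (by omega) (by omega) (by omega),
      typ_eq_A (by omega) (by omega) (by omega) he,
      typ_eq_B (by omega) (by omega) (by omega) (by omega),
      typ_eq_A (by omega) (by omega) (by omega) (by omega)]
    decide
  · rw [typ_eq_A (by omega) (by omega) (by omega) (by omega),
      typ_eq_B (by omega) (by omega) (by omega) (by omega),
      typ_eq_A (by omega) (by omega) (by omega) (by omega),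
      typ_eq_B (by omega) (by omega) (by omega) (by omega)]
    decide

/-- The explicit coloring. -/
def lidColo (n : ℕ) : Fin 5 × Fin n → Fin 4 := fun v => lidPat (lidTyp n v.2.val) v.1

lemma adj5_iff : ∀ i w : Fin 5, (cycleGraph 5).Adj i w ↔ (w = i - 1 ∨ w = i + 1) := by
  decide

lemma nbhd5 (i : Fin 5) : (cycleGraph 5).neighborSet i = {i-1, i+1} := by
  ext w
  rw [SimpleGraph.mem_neighborSet, adj5_iff]
  simp

lemma closedNbhd_box (m : ℕ) (i : Fin 5) (j : Fin (m+2)) :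
    (cycleGraph 5 □ cycleGraph (m+2)).closedNbhd (i,j) =
      {(i,j), (i-1,j), (i+1,j), (i,j-1), (i,j+1)} := by
  ext ⟨a,b⟩
  simp only [SimpleGraph.closedNbhd, neighborSet_boxProd, nbhd5, cycleGraph_neighborSet,
    Set.mem_insert_iff, Set.mem_union, Set.mem_prod, Set.mem_singleton_iff, Prod.mk.injEq,
    Prod.ext_iff]
  tauto

lemma img_closedNbhd (m : ℕ) (i : Fin 5) (j : Fin (m+2)) :
    lidColo (m+2) '' ((cycleGraph 5 □ cycleGraph (m+2)).closedNbhd (i,j)) =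
      ↑(lidFS (lidPat (lidTyp (m+2) (j-1).val)) (lidPat (lidTyp (m+2) j.val))
          (lidPat (lidTyp (m+2) (j+1).val)) i) := by
  rw [closedNbhd_box]
  simp [Set.image_insert_eq, lidFS, lidColo]

lemma upper (m : ℕ) (hm : m % 2 = 1) (hm3 : 3 ≤ m) :
    (cycleGraph 5 □ cycleGraph (m+2)).LidColorable 4 := by
  set G := cycleGraph 5 □ cycleGraph (m+2) with hG
  set f := lidColo (m+2) with hf
  have vert : ∀ (i : Fin 5) (j : Fin (m+2)),
      f (i,j) ≠ f (i+1,j) ∧ f '' G.closedNbhd (i,j) ≠ f '' G.closedNbhd (i+1,j) := by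
    intro i j
    have h1 := vert_core _ (types_vert m hm hm3 j) i
    refine ⟨h1.1, ?_⟩
    rw [hf, hG, img_closedNbhd, img_closedNbhd]
    exact fun hh => h1.2 (Finset.coe_injective hh)
  have horiz : ∀ (i : Fin 5) (j : Fin (m+2)),
      f (i,j) ≠ f (i,j+1) ∧ f '' G.closedNbhd (i,j) ≠ f '' G.closedNbhd (i,j+1) := by
    intro i j
    have h1 := horiz_core _ (types_horiz m hm hm3 j) i
    refine ⟨h1.1, ?_⟩
    rw [hf, hG, img_closedNbhd, img_closedNbhd, show j+1-1 = j from add_sub_cancel_right j 1]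
    exact fun hh => h1.2 (Finset.coe_injective hh)
  have edge : ∀ u w, G.Adj u w → f u ≠ f w ∧ f '' G.closedNbhd u ≠ f '' G.closedNbhd w := by
    rintro ⟨ui, uj⟩ ⟨wi, wj⟩ h
    rw [hG, boxProd_adj] at h
    rcases h with ⟨h5, h2⟩ | ⟨hn, h1⟩
    · simp only at h2
      subst h2
      rcases (adj5_iff ui wi).mp h5 with h | h
      · have : ui = wi + 1 := by
          subst h; rw [sub_add_cancel]
        subst this
        exact ⟨(vert wi uj).1.symm, (vert wi uj).2.symm⟩
      · subst h
        exact vert ui uj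
    · simp only at h1
      subst h1
      rw [cycleGraph_adj'] at hn
      rcases hn with h | h
      · have hval : (1 : Fin (m+2)).val = 1 := by
          rw [Fin.val_one]
        have : uj - wj = 1 := Fin.ext (by rw [hval]; exact h)
        have huj : uj = wj + 1 := by
          rw [sub_eq_iff_eq_add] at this; rw [this]; exact add_comm 1 wj
        subst huj
        exact ⟨(horiz ui wj).1.symm, (horiz ui wj).2.symm⟩
      · have hval : (1 : Fin (m+2)).val = 1 := by
          rw [Fin.val_one]
        have : wj - uj = 1 := Fin.ext (by rw [hval]; exact h)
        have hwj : wj = uj + 1 := by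
          rw [sub_eq_iff_eq_add] at this; rw [this]; exact add_comm 1 uj
        subst hwj
        exact horiz ui uj
  exact ⟨f, fun u w h => (edge u w h).1, fun u w h _ => (edge u w h).2⟩

lemma pair_lemma (X : Set (Fin 3)) (a b : Fin 3) (ha : a ∈ X) (hb : b ∈ X) (hab : a ≠ b)
    (hX : X ≠ Set.univ) : X = {a, b} := by
  ext x
  simp only [Set.mem_insert_iff, Set.mem_singleton_iff]
  constructor
  · intro hx
    by_contra hcon
    push_neg at hcon
    obtain ⟨hxa, hxb⟩ := hcon
    apply hX
    ext y
    simp only [Set.mem_univ, iff_true]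
    have hy : y = a ∨ y = b ∨ y = x := by
      have := a.isLt; have := b.isLt; have := x.isLt; have := y.isLt
      simp only [Fin.ext_iff] at hab hxa hxb ⊢
      omega
    rcases hy with rfl | rfl | rfl <;> assumption
  · rintro (rfl | rfl) <;> assumption

lemma hne5 : ∀ i : Fin 5, i ≠ i + 1 := by decide

lemma not_lid3 (m : ℕ) (hm3 : 3 ≤ m) (g : Fin 5 × Fin (m+2) → Fin 3) :
    ¬ (cycleGraph 5 □ cycleGraph (m+2)).IsLidColoring g := by
  rintro ⟨hp, hl⟩
  set G := cycleGraph 5 □ cycleGraph (m+2) with hG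
  have h10 : (1 : Fin (m+2)) ≠ 0 := by
    simp [Fin.ext_iff]
  have h01 : (1 : Fin (m+2)) ≠ 0 - 1 := by
    have hv : ((0 - 1 : Fin (m+2))).val = m+1 := by rw [Fin.coe_sub_one, if_pos rfl]
    intro hE
    rw [Fin.ext_iff, hv, Fin.val_one] at hE
    omega
  have step : ∀ i : Fin 5,
      (g '' G.closedNbhd (i, 0) = Set.univ) ↔ ¬ (g '' G.closedNbhd (i+1, 0) = Set.univ) := by
    intro i
    have hadj : G.Adj (i, (0 : Fin (m+2))) (i+1, 0) := by
      rw [hG, boxProd_adj]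
      exact Or.inl ⟨(adj5_iff i (i+1)).mpr (Or.inr rfl), rfl⟩
    have hw : ((i, (1 : Fin (m+2))) ∈ G.closedNbhd (i, 0)) := by
      rw [hG, closedNbhd_box]
      simp
    have hnw : ((i, (1 : Fin (m+2))) ∉ G.closedNbhd (i+1, 0)) := by
      rw [hG, closedNbhd_box]
      simp [Prod.ext_iff, hne5 i, h10, h01]
    have hNN : G.closedNbhd (i, (0 : Fin (m+2))) ≠ G.closedNbhd (i+1, 0) :=
      fun hEq => hnw (hEq ▸ hw)
    have hIm := hl hadj hNN
    have hab : g (i, (0 : Fin (m+2))) ≠ g (i+1, 0) := hp hadj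
    have haU : g (i, (0 : Fin (m+2))) ∈ g '' G.closedNbhd (i, 0) :=
      Set.mem_image_of_mem g (Set.mem_insert _ _)
    have hbU : g (i+1, (0 : Fin (m+2))) ∈ g '' G.closedNbhd (i, 0) :=
      Set.mem_image_of_mem g (Set.mem_insert_iff.mpr (Or.inr hadj))
    have haW : g (i, (0 : Fin (m+2))) ∈ g '' G.closedNbhd (i+1, 0) :=
      Set.mem_image_of_mem g (Set.mem_insert_iff.mpr (Or.inr hadj.symm))
    have hbW : g (i+1, (0 : Fin (m+2))) ∈ g '' G.closedNbhd (i+1, 0) :=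
      Set.mem_image_of_mem g (Set.mem_insert _ _)
    constructor
    · intro hU hW
      exact hIm (hU.trans hW.symm)
    · intro hW
      by_contra hU
      exact hIm ((pair_lemma _ _ _ haU hbU hab hU).trans
        (pair_lemma _ _ _ haW hbW hab hW).symm)
  have e0 : ((0 : Fin 5) + 1) = 1 := by decide
  have e1 : ((1 : Fin 5) + 1) = 2 := by decide
  have e2 : ((2 : Fin 5) + 1) = 3 := by decide
  have e3 : ((3 : Fin 5) + 1) = 4 := by decide
  have e4 : ((4 : Fin 5) + 1) = 0 := by decide
  have s0 := step 0
  have s1 := step 1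
  have s2 := step 2
  have s3 := step 3
  have s4 := step 4
  rw [e0] at s0
  rw [e1] at s1
  rw [e2] at s2
  rw [e3] at s3
  rw [e4] at s4
  tauto

lemma not_small_s9 (m k : ℕ) (hm3 : 3 ≤ m) (hk : k ≤ 3) :
    ¬ (cycleGraph 5 □ cycleGraph (m+2)).LidColorable k := by
  rintro ⟨f, hp, hl⟩
  refine not_lid3 m hm3 (Fin.castLE hk ∘ f) ⟨?_, ?_⟩
  · intro u w h hne
    exact hp h (Fin.castLE_injective hk hne)
  · intro u w h hne hEq
    apply hl h hne
    apply Function.Injective.image_injective (Fin.castLE_injective hk)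
    rw [Set.image_comp, Set.image_comp] at hEq
    exact hEq

/-- For every odd `n ≥ 5`, `χ_lid(C_5 □ C_n) = 4`. -/
theorem lid_stmt_9 (n : ℕ) (hn : Odd n) (hn5 : 5 ≤ n) :
    (cycleGraph 5 □ cycleGraph n).lidChromaticNumber = 4 := by
  obtain ⟨m, rfl⟩ : ∃ m, n = m + 2 := ⟨n - 2, by omega⟩
  have hm : m % 2 = 1 := by rcases hn with ⟨t, ht⟩; omega
  have hm3 : 3 ≤ m := by omega
  have hub := upper m hm hm3
  rw [SimpleGraph.lidChromaticNumber]
  apply le_antisymm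
  · have h4 : (4:ℕ) ∈ {k : ℕ | (cycleGraph 5 □ cycleGraph (m+2)).LidColorable k} := hub
    calc (⨅ k ∈ {k : ℕ | (cycleGraph 5 □ cycleGraph (m+2)).LidColorable k}, (k:ℕ∞))
        ≤ ((4:ℕ) : ℕ∞) := iInf₂_le 4 h4
      _ = 4 := by norm_num
  · refine le_iInf₂ fun k hk => ?_
    have hk4 : 4 ≤ k := by
      by_contra hlt
      exact not_small_s9 m k hm3 (by omega) hk
    exact_mod_cast hk4
end

section
/- For every odd integer m ∈ {7, 9, 11} and every odd integer n ≥ m, the lid-chromatic number of the Cartesian product of the cycles C_m and C_n satisfies χ_lid(C_m □ C_n) = 4. -/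
open SimpleGraph
open scoped Fin.CommRing Fin.NatCast

/- ### Auxiliary lemmas -/

lemma cycleAdj {m : ℕ} {u v : Fin (m+2)} :
    (cycleGraph (m+2)).Adj u v ↔ u = v + 1 ∨ v = u + 1 := by
  rw [cycleGraph_adj]
  constructor
  · rintro (h | h)
    · left; rw [← h]; ring
    · right; rw [← h]; ring
  · rintro (rfl | rfl)
    · left; ring_nf
    · right; ring_nf

lemma closedNbhd_eq {m n : ℕ} (a : Fin (m+2)) (b : Fin (n+2)) :
    (cycleGraph (m+2) □ cycleGraph (n+2)).closedNbhd (a, b) =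
      {(a, b), (a - 1, b), (a + 1, b), (a, b - 1), (a, b + 1)} := by
  rw [SimpleGraph.closedNbhd, neighborSet_boxProd]
  rw [cycleGraph_neighborSet, cycleGraph_neighborSet]
  ext ⟨x, y⟩
  simp only [Set.mem_insert_iff, Set.mem_union, Set.mem_prod, Set.mem_singleton_iff,
    Prod.mk.injEq, Prod.ext_iff]
  tauto

lemma no_two_coloring {m : ℕ} (hodd : Odd m) (g : Fin (m+2) → Bool)
    (h : ∀ i : Fin (m+2), g i ≠ g (i + 1)) : False := by
  have hstep : ∀ i : Fin (m+2), g (i + 1) = !g i := by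
    intro i
    have := h i; cases hgi : g i <;> cases hgi1 : g (i+1) <;> simp_all
  have h2 : ∀ k : ℕ, g ((2*k : ℕ) : Fin (m+2)) = g 0 := by
    intro k
    induction k with
    | zero => norm_num
    | succ k ih =>
      have : ((2*(k+1) : ℕ) : Fin (m+2)) = ((2*k : ℕ) : Fin (m+2)) + 1 + 1 := by
        push_cast; ring
      rw [this, hstep, hstep, Bool.not_not, ih]
  obtain ⟨t, rfl⟩ := hodd
  have hcast : ((2*t : ℕ) : Fin (2*t+1+2)) + 1 + 1 + 1 = 0 := by
    have : ((2*t+1+2 : ℕ) : Fin (2*t+1+2)) = 0 := Fin.natCast_self _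
    rw [← this]; push_cast; ring
  have e1 := hstep ((2*t : ℕ) : Fin (2*t+1+2))
  have e2 := hstep (((2*t : ℕ) : Fin (2*t+1+2)) + 1)
  have e3 := hstep (((2*t : ℕ) : Fin (2*t+1+2)) + 1 + 1)
  rw [hcast] at e3
  rw [h2] at e1
  rw [e1] at e2
  rw [e2] at e3
  simp at e3

lemma fin_succ_ne {m : ℕ} (a : Fin (m+2)) : a + 1 ≠ a := by
  intro h
  have h0 : (1 : Fin (m+2)) = 0 := by
    have := h.symm.trans (by ring_nf : a + 1 = 1 + a)
    calc (1 : Fin (m+2)) = 1 + a - a := by ring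
    _ = a - a := by rw [← this]
    _ = 0 := by ring
  have := congrArg Fin.val h0
  simp [Fin.val_one] at this

lemma lower_bound {m n k : ℕ} (hm : Odd m) (hk : k ≤ 3) :
    ¬ (cycleGraph (m+2) □ cycleGraph (n+2)).LidColorable k := by
  classical
  rintro ⟨f, hp, hl⟩
  set G := cycleGraph (m+2) □ cycleGraph (n+2) with hG
  have hN : ∀ u w : Fin (m+2) × Fin (n+2), G.Adj u w → G.closedNbhd u ≠ G.closedNbhd w := by
    rintro ⟨a, b⟩ ⟨a', b'⟩ hadj heq
    rw [closedNbhd_eq, closedNbhd_eq] at heq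
    rcases boxProd_adj.mp hadj with ⟨ha, hb⟩ | ⟨hb, ha⟩
    · -- vertical edge; b = b'
      simp only at ha hb
      subst hb
      have hane : a ≠ a' := ha.ne
      have hx : ((a, b+1) : Fin (m+2) × Fin (n+2)) ∈
          ({(a, b), (a - 1, b), (a + 1, b), (a, b - 1), (a, b + 1)} : Set _) := by simp
      rw [heq] at hx
      simp only [Set.mem_insert_iff, Set.mem_singleton_iff, Prod.mk.injEq] at hx
      rcases hx with ⟨h1, h2⟩ | ⟨h1, h2⟩ | ⟨h1, h2⟩ | ⟨h1, h2⟩ | ⟨h1, h2⟩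
      · exact fin_succ_ne b h2
      · exact fin_succ_ne b h2
      · exact fin_succ_ne b h2
      · exact hane h1
      · exact hane h1
    · -- horizontal edge; a = a'
      simp only at ha hb
      subst ha
      have hbne : b ≠ b' := hb.ne
      have hx : ((a+1, b) : Fin (m+2) × Fin (n+2)) ∈
          ({(a, b), (a - 1, b), (a + 1, b), (a, b - 1), (a, b + 1)} : Set _) := by simp
      rw [heq] at hx
      simp only [Set.mem_insert_iff, Set.mem_singleton_iff, Prod.mk.injEq] at hx
      rcases hx with ⟨h1, h2⟩ | ⟨h1, h2⟩ | ⟨h1, h2⟩ | ⟨h1, h2⟩ | ⟨h1, h2⟩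
      · exact fin_succ_ne a h1
      · exact hbne h2
      · exact hbne h2
      · exact fin_succ_ne a h1
      · exact fin_succ_ne a h1
  have key : ∀ u w, G.Adj u w →
      ((f '' G.closedNbhd u = Set.univ) ↔ ¬ (f '' G.closedNbhd w = Set.univ)) := by
    intro u w hadj
    have hne := hl hadj (hN u w hadj)
    have hmemu : ∀ v, {f u, f w} ⊆ f '' G.closedNbhd v → True := fun _ _ => trivial
    have hsubu : ({f u, f w} : Set (Fin k)) ⊆ f '' G.closedNbhd u := by
      rintro x (rfl | rfl)
      · exact ⟨u, Set.mem_insert _ _, rfl⟩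
      · exact ⟨w, Set.mem_insert_of_mem _ hadj, rfl⟩
    have hsubw : ({f u, f w} : Set (Fin k)) ⊆ f '' G.closedNbhd w := by
      rintro x (rfl | rfl)
      · exact ⟨u, Set.mem_insert_of_mem _ hadj.symm, rfl⟩
      · exact ⟨w, Set.mem_insert _ _, rfl⟩
    have hpair : ({f u, f w} : Set (Fin k)).ncard = 2 := Set.ncard_pair (hp hadj)
    have small : ∀ v, ({f u, f w} : Set (Fin k)) ⊆ f '' G.closedNbhd v →
        f '' G.closedNbhd v ≠ Set.univ → f '' G.closedNbhd v = {f u, f w} := by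
      intro v hsub hne'
      have hss : f '' G.closedNbhd v ⊂ Set.univ := Set.ssubset_univ_iff.mpr hne'
      have hlt := Set.ncard_lt_ncard hss (Set.toFinite _)
      rw [Set.ncard_univ, Nat.card_eq_fintype_card, Fintype.card_fin] at hlt
      exact (Set.eq_of_subset_of_ncard_le hsub (by omega) (Set.toFinite _)).symm
    constructor
    · intro hu hw
      exact hne (hu.trans hw.symm)
    · intro hw
      by_contra hu
      exact hne ((small u hsubu hu).trans (small w hsubw hw).symm)
  have hGadj : ∀ i : Fin (m+2), G.Adj (i, (0 : Fin (n+2))) (i+1, 0) := by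
    intro i
    exact boxProd_adj.mpr (Or.inl ⟨cycleAdj.mpr (Or.inr rfl), rfl⟩)
  apply no_two_coloring hm (fun i => decide (f '' G.closedNbhd (i, (0 : Fin (n+2))) = Set.univ))
  intro i
  have hk2 := key _ _ (hGadj i)
  by_cases h1 : f '' G.closedNbhd (i, (0 : Fin (n+2))) = Set.univ <;>
    simp [h1] at hk2 ⊢ <;> simp [hk2]

/-- Color set of the closed neighborhood of row `i` in the column `C`, with
left column `L` and right column `R`. -/
def NS {m : ℕ} (L C R : Fin (m+2) → Fin 4) (i : Fin (m+2)) : Finset (Fin 4) :=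
  {C i, C (i-1), C (i+1), L i, R i}

/-- Local conditions for a window of four consecutive columns `L C R RR`. -/
def windowOK {m : ℕ} (L C R RR : Fin (m+2) → Fin 4) : Prop :=
  ∀ i : Fin (m+2), C i ≠ C (i+1) ∧ C i ≠ R i ∧
    NS L C R i ≠ NS L C R (i+1) ∧ NS L C R i ≠ NS C R RR i

/-- The column pattern: seam `S0 S1 S2` then alternating `A B`. -/
def colN {m : ℕ} (A B S0 S1 S2 : Fin (m+2) → Fin 4) (j : ℕ) : Fin (m+2) → Fin 4 :=
  if j = 0 then S0 else if j = 1 then S1 else if j = 2 then S2 else if Odd j then A else B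

lemma colN_odd {m : ℕ} (A B S0 S1 S2 : Fin (m+2) → Fin 4) {j : ℕ} (h3 : 3 ≤ j) (h : Odd j) :
    colN A B S0 S1 S2 j = A := by
  unfold colN
  rw [if_neg (by omega), if_neg (by omega), if_neg (by omega), if_pos h]

lemma colN_even {m : ℕ} (A B S0 S1 S2 : Fin (m+2) → Fin 4) {j : ℕ} (h3 : 3 ≤ j) (h : ¬ Odd j) :
    colN A B S0 S1 S2 j = B := by
  unfold colN
  rw [if_neg (by omega), if_neg (by omega), if_neg (by omega), if_neg h]


lemma coe_NS {m : ℕ} (L C R : Fin (m+2) → Fin 4) (i : Fin (m+2)) :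
    (↑(NS L C R i) : Set (Fin 4)) = {C i, C (i-1), C (i+1), L i, R i} := by
  simp [NS]

lemma upper_bound {m n : ℕ} (hn : Odd (n+2)) (hn7 : 7 ≤ n+2)
    (A B S0 S1 S2 : Fin (m+2) → Fin 4)
    (w0 : windowOK B S0 S1 S2) (w1 : windowOK S0 S1 S2 A)
    (w2 : windowOK S1 S2 A B) (w3 : windowOK S2 A B A)
    (w4 : windowOK B A B A) (w5 : windowOK A B A B)
    (w6 : windowOK B A B S0) (w7 : windowOK A B S0 S1) :
    (cycleGraph (m+2) □ cycleGraph (n+2)).LidColorable 4 := by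
  have ho : n % 2 = 1 := by rcases hn with ⟨t, ht⟩; omega
  have hn5 : 5 ≤ n := by omega
  set col : Fin (n+2) → Fin (m+2) → Fin 4 := fun b => colN A B S0 S1 S2 b.val with hcol
  have hvadd : ∀ b : Fin (n+2), (b+1).val = if b.val = n+1 then 0 else b.val + 1 := by
    intro b
    rw [Fin.val_add_one]
    congr 1
    simp [Fin.ext_iff, Fin.val_last]
  have hvsub : ∀ b : Fin (n+2), (b-1).val = if b.val = 0 then n+1 else b.val - 1 := by
    intro b
    rw [Fin.coe_sub_one]
    congr 1
    simp only [Fin.ext_iff, Fin.val_zero]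
  -- evaluate a column at a given index value
  have evalA : ∀ (b : Fin (n+2)) (j : ℕ), b.val = j → 3 ≤ j → j % 2 = 1 →
      col b = A := by
    intro b j hj h3 hodd
    show colN A B S0 S1 S2 b.val = A
    rw [hj]; exact colN_odd _ _ _ _ _ h3 (Nat.odd_iff.mpr hodd)
  have evalB : ∀ (b : Fin (n+2)) (j : ℕ), b.val = j → 3 ≤ j → j % 2 = 0 →
      col b = B := by
    intro b j hj h3 heven
    show colN A B S0 S1 S2 b.val = B
    rw [hj]; exact colN_even _ _ _ _ _ h3 (by rw [Nat.odd_iff]; omega)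
  have evalS0 : ∀ (b : Fin (n+2)), b.val = 0 → col b = S0 := by
    intro b hj; show colN A B S0 S1 S2 b.val = S0
    rw [hj]; simp [colN]
  have evalS1 : ∀ (b : Fin (n+2)), b.val = 1 → col b = S1 := by
    intro b hj; show colN A B S0 S1 S2 b.val = S1
    rw [hj]; simp [colN]
  have evalS2 : ∀ (b : Fin (n+2)), b.val = 2 → col b = S2 := by
    intro b hj; show colN A B S0 S1 S2 b.val = S2
    rw [hj]; simp [colN]
  have winAt : ∀ b : Fin (n+2),
      windowOK (col (b-1)) (col b) (col (b+1)) (col (b+1+1)) := by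
    intro b
    have hblt : b.val < n + 2 := b.isLt
    have hbm := hvsub b
    have hb1 := hvadd b
    have hb2 := hvadd (b+1)
    by_cases h0 : b.val = 0
    · have vm : (b-1).val = n+1 := by rw [hbm, if_pos h0] <;> omega
      have vp : (b+1).val = 1 := by rw [hb1, if_neg (by omega), h0] <;> omega
      have vpp : (b+1+1).val = 2 := by rw [hb2, vp, if_neg (by omega)] <;> omega
      rw [evalB _ _ vm (by omega) (by omega), evalS0 _ h0, evalS1 _ vp, evalS2 _ vpp]
      exact w0
    by_cases h1 : b.val = 1
    · have vm : (b-1).val = 0 := by rw [hbm, if_neg (by omega), h1] <;> omega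
      have vp : (b+1).val = 2 := by rw [hb1, if_neg (by omega), h1] <;> omega
      have vpp : (b+1+1).val = 3 := by rw [hb2, vp, if_neg (by omega)] <;> omega
      rw [evalS0 _ vm, evalS1 _ h1, evalS2 _ vp, evalA _ _ vpp (by omega) (by omega)]
      exact w1
    by_cases h2 : b.val = 2
    · have vm : (b-1).val = 1 := by rw [hbm, if_neg (by omega), h2] <;> omega
      have vp : (b+1).val = 3 := by rw [hb1, if_neg (by omega), h2] <;> omega
      have vpp : (b+1+1).val = 4 := by rw [hb2, vp, if_neg (by omega)] <;> omega
      rw [evalS1 _ vm, evalS2 _ h2, evalA _ _ vp (by omega) (by omega),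
        evalB _ _ vpp (by omega) (by omega)]
      exact w2
    by_cases h3 : b.val = 3
    · have vm : (b-1).val = 2 := by rw [hbm, if_neg (by omega), h3] <;> omega
      have vp : (b+1).val = 4 := by rw [hb1, if_neg (by omega), h3] <;> omega
      have vpp : (b+1+1).val = 5 := by rw [hb2, vp, if_neg (by omega)] <;> omega
      rw [evalS2 _ vm, evalA _ _ h3 (by omega) (by omega),
        evalB _ _ vp (by omega) (by omega), evalA _ _ vpp (by omega) (by omega)]
      exact w3
    by_cases hlast : b.val = n+1
    · -- last column (even index since n is odd): window (A, B, S0, S1)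
      have vm : (b-1).val = n := by rw [hbm, if_neg (by omega), hlast] <;> omega
      have vp : (b+1).val = 0 := by rw [hb1, if_pos hlast] <;> omega
      have vpp : (b+1+1).val = 1 := by rw [hb2, vp, if_neg (by omega)] <;> omega
      rw [evalA _ _ vm (by omega) (by omega), evalB _ _ hlast (by omega) (by omega),
        evalS0 _ vp, evalS1 _ vpp]
      exact w7
    by_cases hpen : b.val = n
    · -- second-to-last column (odd index): window (B, A, B, S0)
      have vm : (b-1).val = n-1 := by rw [hbm, if_neg (by omega), hpen] <;> omega
      have vp : (b+1).val = n+1 := by rw [hb1, if_neg (by omega), hpen] <;> omega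
      have vpp : (b+1+1).val = 0 := by rw [hb2, vp, if_pos rfl] <;> omega
      rw [evalB _ _ vm (by omega) (by omega), evalA _ _ hpen (by omega) (by omega),
        evalB _ _ vp (by omega) (by omega), evalS0 _ vpp]
      exact w6
    · -- generic interior column: 4 ≤ b.val ≤ n-1
      have hge : 4 ≤ b.val := by omega
      have hle : b.val ≤ n - 1 := by omega
      have vm : (b-1).val = b.val - 1 := by rw [hbm, if_neg (by omega)] <;> omega
      have vp : (b+1).val = b.val + 1 := by rw [hb1, if_neg (by omega)] <;> omega
      have vpp : (b+1+1).val = b.val + 2 := by rw [hb2, vp, if_neg (by omega)] <;> omega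
      by_cases hpar : b.val % 2 = 1
      · rw [evalB _ _ vm (by omega) (by omega), evalA _ _ rfl (by omega) (by omega),
          evalB _ _ vp (by omega) (by omega), evalA _ _ vpp (by omega) (by omega)]
        exact w4
      · rw [evalA _ _ vm (by omega) (by omega), evalB _ _ rfl (by omega) (by omega),
          evalA _ _ vp (by omega) (by omega), evalB _ _ vpp (by omega) (by omega)]
        exact w5
  -- the coloring
  refine ⟨fun p => col p.2 p.1, ?_, ?_⟩
  · rintro ⟨a, b⟩ ⟨a', b'⟩ hadj
    rcases boxProd_adj.mp hadj with ⟨ha, hb⟩ | ⟨hb, ha⟩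
    · simp only at ha hb
      subst hb
      rcases cycleAdj.mp ha with rfl | rfl
      · exact (((winAt b) a').1).symm
      · exact ((winAt b) a).1
    · simp only at ha hb
      subst ha
      rcases cycleAdj.mp hb with rfl | rfl
      · exact (((winAt b') a).2.1).symm
      · exact ((winAt b) a).2.1
  · -- the identifying condition
    have himg : ∀ (a : Fin (m+2)) (b : Fin (n+2)),
        (fun p : Fin (m+2) × Fin (n+2) => col p.2 p.1) ''
          (cycleGraph (m+2) □ cycleGraph (n+2)).closedNbhd (a, b) =
          ↑(NS (col (b-1)) (col b) (col (b+1)) a) := by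
      intro a b
      rw [closedNbhd_eq, coe_NS]
      rw [Set.image_insert_eq, Set.image_insert_eq, Set.image_insert_eq,
        Set.image_insert_eq, Set.image_singleton]
    rintro ⟨a, b⟩ ⟨a', b'⟩ hadj -
    rw [himg, himg]
    intro hEq
    replace hEq := Finset.coe_injective hEq
    rcases boxProd_adj.mp hadj with ⟨ha, hb⟩ | ⟨hb, ha⟩
    · simp only at ha hb
      subst hb
      rcases cycleAdj.mp ha with rfl | rfl
      · exact (((winAt b) a').2.2.1) hEq.symm
      · exact (((winAt b) a).2.2.1) hEq
    · simp only at ha hb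
      subst ha
      rcases cycleAdj.mp hb with rfl | rfl
      · -- b = b' + 1
        have e : col (b'+1-1) = col b' := by rw [add_sub_cancel_right]
        rw [e] at hEq
        exact (((winAt b') a).2.2.2) hEq.symm
      · -- b' = b + 1
        have e : col (b+1-1) = col b := by rw [add_sub_cancel_right]
        rw [e] at hEq
        exact (((winAt b) a).2.2.2) hEq

def A7 : Fin 7 → Fin 4 := ![0,1,0,1,2,3,2]
def B7 : Fin 7 → Fin 4 := ![2,3,2,3,1,0,1]
def S07 : Fin 7 → Fin 4 := ![1,2,1,2,3,1,2]
def S17 : Fin 7 → Fin 4 := ![3,0,3,0,2,0,1]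
def S27 : Fin 7 → Fin 4 := ![1,2,1,2,1,2,0]
def A9 : Fin 9 → Fin 4 := ![0,1,0,1,0,1,2,3,2]
def B9 : Fin 9 → Fin 4 := ![2,3,2,3,2,3,1,0,1]
def S09 : Fin 9 → Fin 4 := ![1,2,1,2,1,2,3,1,2]
def S19 : Fin 9 → Fin 4 := ![3,0,3,0,3,0,2,0,1]
def S29 : Fin 9 → Fin 4 := ![1,2,1,2,1,2,1,2,0]
def A11 : Fin 11 → Fin 4 := ![0,1,0,1,0,1,0,1,2,3,2]
def B11 : Fin 11 → Fin 4 := ![2,3,2,3,2,3,2,3,1,0,1]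
def S011 : Fin 11 → Fin 4 := ![1,2,1,2,1,2,1,2,3,1,2]
def S111 : Fin 11 → Fin 4 := ![3,0,3,0,3,0,3,0,2,0,1]
def S211 : Fin 11 → Fin 4 := ![1,2,1,2,1,2,1,2,1,2,0]

set_option maxRecDepth 100000 in
/-- For `m ∈ {7, 9, 11}` and every odd `n ≥ m`, `χ_lid(C_m □ C_n) = 4`. -/
theorem lid_stmt_10 (m n : ℕ) (hm : m = 7 ∨ m = 9 ∨ m = 11) (hn : Odd n) (hmn : m ≤ n) :
    (cycleGraph m □ cycleGraph n).lidChromaticNumber = 4 := by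
  obtain ⟨n', rfl⟩ : ∃ n', n = n' + 2 := ⟨n - 2, by omega⟩
  have hup : (cycleGraph m □ cycleGraph (n'+2)).LidColorable 4 := by
    rcases hm with rfl | rfl | rfl
    · exact upper_bound (m := 5) hn (by omega) A7 B7 S07 S17 S27
        (by unfold windowOK NS; decide) (by unfold windowOK NS; decide)
        (by unfold windowOK NS; decide) (by unfold windowOK NS; decide)
        (by unfold windowOK NS; decide) (by unfold windowOK NS; decide)
        (by unfold windowOK NS; decide) (by unfold windowOK NS; decide)
    · exact upper_bound (m := 7) hn (by omega) A9 B9 S09 S19 S29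
        (by unfold windowOK NS; decide) (by unfold windowOK NS; decide)
        (by unfold windowOK NS; decide) (by unfold windowOK NS; decide)
        (by unfold windowOK NS; decide) (by unfold windowOK NS; decide)
        (by unfold windowOK NS; decide) (by unfold windowOK NS; decide)
    · exact upper_bound (m := 9) hn (by omega) A11 B11 S011 S111 S211
        (by unfold windowOK NS; decide) (by unfold windowOK NS; decide)
        (by unfold windowOK NS; decide) (by unfold windowOK NS; decide)
        (by unfold windowOK NS; decide) (by unfold windowOK NS; decide)
        (by unfold windowOK NS; decide) (by unfold windowOK NS; decide)
  have hlow : ∀ k : ℕ, k ≤ 3 → ¬ (cycleGraph m □ cycleGraph (n'+2)).LidColorable k := by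
    rcases hm with rfl | rfl | rfl
    · exact fun k hk => lower_bound (m := 5) (by decide) hk
    · exact fun k hk => lower_bound (m := 7) (by decide) hk
    · exact fun k hk => lower_bound (m := 9) (by decide) hk
  rw [SimpleGraph.lidChromaticNumber]
  apply le_antisymm
  · exact iInf₂_le_of_le 4 hup (by norm_num)
  · refine le_iInf₂ fun k hk => ?_
    have h4 : 4 ≤ k := by
      by_contra h
      exact hlow k (by omega) hk
    exact_mod_cast h4
end

section
/- Let G and H be connected simple graphs, each with at least two vertices, such that at least one of G and H has at least three vertices. If (u1,v1) and (u2,v2) are two adjacent vertices of the tensor product G × H, then the closed neighborhoods of (u1,v1) and (u2,v2) in G × H are distinct, i.e., N[(u1,v1)] ≠ N[(u2,v2)]. -/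
open SimpleGraph

/-- If `G` and `H` are connected graphs with at least two vertices each, one of which has
at least three vertices, then adjacent vertices of the tensor product `G × H` have
distinct closed neighborhoods. -/
theorem lid_stmt_12 {α β : Type*} [Nontrivial α] [Nontrivial β]
    (G : SimpleGraph α) (H : SimpleGraph β) (hG : G.Connected) (hH : H.Connected)
    (h3 : (∃ a b c : α, a ≠ b ∧ a ≠ c ∧ b ≠ c) ∨ (∃ a b c : β, a ≠ b ∧ a ≠ c ∧ b ≠ c))
    (u₁ u₂ : α) (v₁ v₂ : β) (h : (G.tensorProd H).Adj (u₁, v₁) (u₂, v₂)) :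
    (G.tensorProd H).closedNbhd (u₁, v₁) ≠ (G.tensorProd H).closedNbhd (u₂, v₂) := by
  intro hEq
  -- every neighbor of u₁ is u₂
  have n1 : ∀ u, G.Adj u₁ u → u = u₂ := by
    intro u hu
    have hm : ((u, v₂) : α × β) ∈ (G.tensorProd H).closedNbhd (u₁, v₁) :=
      Set.mem_insert_iff.mpr (Or.inr ⟨hu, h.2⟩)
    rw [hEq] at hm
    rcases Set.mem_insert_iff.mp hm with heq | hadj
    · exact congrArg Prod.fst heq
    · exact absurd hadj.2 (H.loopless.irrefl v₂)
  have n2 : ∀ u, G.Adj u₂ u → u = u₁ := by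
    intro u hu
    have hm : ((u, v₁) : α × β) ∈ (G.tensorProd H).closedNbhd (u₂, v₂) :=
      Set.mem_insert_iff.mpr (Or.inr ⟨hu, h.2.symm⟩)
    rw [← hEq] at hm
    rcases Set.mem_insert_iff.mp hm with heq | hadj
    · exact congrArg Prod.fst heq
    · exact absurd hadj.2 (H.loopless.irrefl v₁)
  have m1 : ∀ v, H.Adj v₁ v → v = v₂ := by
    intro v hv
    have hm : ((u₂, v) : α × β) ∈ (G.tensorProd H).closedNbhd (u₁, v₁) :=
      Set.mem_insert_iff.mpr (Or.inr ⟨h.1, hv⟩)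
    rw [hEq] at hm
    rcases Set.mem_insert_iff.mp hm with heq | hadj
    · exact congrArg Prod.snd heq
    · exact absurd hadj.1 (G.loopless.irrefl u₂)
  have m2 : ∀ v, H.Adj v₂ v → v = v₁ := by
    intro v hv
    have hm : ((u₁, v) : α × β) ∈ (G.tensorProd H).closedNbhd (u₂, v₂) :=
      Set.mem_insert_iff.mpr (Or.inr ⟨h.1.symm, hv⟩)
    rw [← hEq] at hm
    rcases Set.mem_insert_iff.mp hm with heq | hadj
    · exact congrArg Prod.snd heq
    · exact absurd hadj.1 (G.loopless.irrefl u₁)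
  rcases h3 with ⟨a, b, c, hab, hac, hbc⟩ | ⟨a, b, c, hab, hac, hbc⟩
  · -- every vertex of G is u₁ or u₂
    have key : ∀ {x y : α}, G.Walk x y → (x = u₁ ∨ x = u₂) → (y = u₁ ∨ y = u₂) := by
      intro x y w
      induction w with
      | nil => exact id
      | cons hadj p ih =>
        rintro (rfl | rfl)
        · exact ih (Or.inr (n1 _ hadj))
        · exact ih (Or.inl (n2 _ hadj))
    have all : ∀ x : α, x = u₁ ∨ x = u₂ := by
      intro x
      obtain ⟨w⟩ := hG.preconnected u₁ x
      exact key w (Or.inl rfl)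
    rcases all a with rfl | rfl <;> rcases all b with rfl | rfl <;>
      rcases all c with rfl | rfl <;> simp_all
  · have key : ∀ {x y : β}, H.Walk x y → (x = v₁ ∨ x = v₂) → (y = v₁ ∨ y = v₂) := by
      intro x y w
      induction w with
      | nil => exact id
      | cons hadj p ih =>
        rintro (rfl | rfl)
        · exact ih (Or.inr (m1 _ hadj))
        · exact ih (Or.inl (m2 _ hadj))
    have all : ∀ x : β, x = v₁ ∨ x = v₂ := by
      intro x
      obtain ⟨w⟩ := hH.preconnected v₁ x
      exact key w (Or.inl rfl)
    rcases all a with rfl | rfl <;> rcases all b with rfl | rfl <;>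
      rcases all c with rfl | rfl <;> simp_all
end

section
/- Let G and H be connected simple graphs, each with at least two vertices, such that at least one of G and H has at least three vertices. Then χ_lid(G × H) ≤ χ(G)·χ(H), where χ denotes the chromatic number. -/
open SimpleGraph

open Set


section Helpers

variable {V : Type*} {G : SimpleGraph V}

private lemma walk_closure {S : Set V} (hS : ∀ u ∈ S, ∀ v, G.Adj u v → v ∈ S)
    {x y : V} (p : G.Walk x y) (hx : x ∈ S) : y ∈ S := by
  induction p with
  | nil => exact hx
  | cons h q ih => exact ih (hS _ hx _ h)

private lemma exists_good_root (hG : G.Connected)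
    (h3 : ∃ a b c : V, a ≠ b ∧ a ≠ c ∧ b ≠ c) :
    ∃ r : V, ∀ y, G.Adj r y → ∃ z, G.Adj y z ∧ z ≠ r := by
  classical
  obtain ⟨a, b, c, hab, hac, hbc⟩ := h3
  by_cases ha : ∀ y, G.Adj a y → ∃ z, G.Adj y z ∧ z ≠ a
  · exact ⟨a, ha⟩
  · push_neg at ha
    obtain ⟨y0, hay0, hy0⟩ := ha
    refine ⟨y0, ?_⟩
    intro y hy
    have hya : y = a := hy0 y hy
    rw [hya]
    by_contra hcon
    push_neg at hcon
    have hclosed : ∀ u ∈ ({a, y0} : Set V), ∀ v, G.Adj u v → v ∈ ({a, y0} : Set V) := by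
      rintro u hu v huv
      rcases hu with rfl | hu
      · exact Or.inr (hcon v huv)
      · rcases hu with rfl
        exact Or.inl (hy0 v huv)
    have hall : ∀ w : V, w ∈ ({a, y0} : Set V) := by
      intro w
      exact walk_closure hclosed (hG.preconnected a w).some (Or.inl rfl)
    have hb := hall b
    have hc := hall c
    rcases hb with rfl | hb
    · exact hab rfl
    · rcases hb with rfl
      rcases hc with rfl | hc
      · exact hac rfl
      · exact hbc hc.symm

private lemma exists_parent (hG : G.Connected) {r v : V} (h : G.dist r v ≠ 0) :
    ∃ p, G.Adj v p ∧ G.dist r p + 1 = G.dist r v := by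
  obtain ⟨w, hw⟩ := hG.exists_walk_length_eq_dist r v
  have hw' : w.reverse.length = G.dist r v := by
    rw [SimpleGraph.Walk.length_reverse]; exact hw
  cases hrev : w.reverse with
  | nil =>
    rw [hrev] at hw'; simp at hw'; simp at h
  | cons hadj q =>
    rename_i p
    refine ⟨p, hadj, ?_⟩
    have h1 : G.dist r p ≤ q.reverse.length := SimpleGraph.dist_le _
    rw [SimpleGraph.Walk.length_reverse] at h1
    have h2 : q.length + 1 = G.dist r v := by
      rw [hrev] at hw'
      simpa [SimpleGraph.Walk.length_cons] using hw'
    have h3 : G.dist r v ≤ G.dist r p + 1 := by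
      calc G.dist r v ≤ G.dist r p + G.dist p v := hG.dist_triangle
        _ ≤ G.dist r p + 1 := by
            have : G.dist p v ≤ 1 := by
              simpa using SimpleGraph.dist_le hadj.symm.toWalk
            omega
    omega

private lemma adj_dist_le (hG : G.Connected) {r u v : V} (h : G.Adj u v) :
    G.dist r v ≤ G.dist r u + 1 := by
  calc G.dist r v ≤ G.dist r u + G.dist u v := hG.dist_triangle
    _ ≤ G.dist r u + 1 := by
        have : G.dist u v ≤ 1 := by simpa using SimpleGraph.dist_le h.toWalk
        omega

private lemma walk_parity {g : V → ZMod 2} (hg : ∀ ⦃u v⦄, G.Adj u v → g u ≠ g v)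
    {x y : V} (p : G.Walk x y) : g y = g x + (p.length : ZMod 2) := by
  induction p with
  | nil => simp
  | cons h q ih =>
    rename_i u w z
    have h1 : g w = g u + 1 := by
      have := hg h
      revert this
      generalize g u = s; generalize g w = t
      revert s t; decide
    rw [SimpleGraph.Walk.length_cons]
    rw [ih, h1]
    push_cast
    ring

end Helpers

section NWB

variable {β : Type*}

/-- Existence of a map with no "weakly bad" edge. -/
private lemma exists_nwb (H : SimpleGraph β) (hH : H.Connected)
    (h3 : ∃ a b c : β, a ≠ b ∧ a ≠ c ∧ b ≠ c) {l : ℕ} (hl : 2 ≤ l) (hcol : H.Colorable l) :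
    ∃ γ : β → Fin l, ∀ ⦃v1 v2⦄, H.Adj v1 v2 →
      ¬(γ '' H.neighborSet v1 = {γ v2} ∧ γ '' H.neighborSet v2 = {γ v1}) := by
  classical
  obtain ⟨r, hroot⟩ := exists_good_root hH h3
  set d : β → ℕ := fun v => H.dist r v with hd
  have hzero : ∀ v, d v = 0 → v = r := by
    intro v hv
    exact (hH.dist_eq_zero_iff.mp hv).symm
  by_cases hbip : H.Colorable 2
  · -- bipartite case: pattern [0,1,1,0] on distance mod 4
    obtain ⟨C⟩ := hbip
    set g2 : β → ZMod 2 := fun v => ((C v : ℕ) : ZMod 2) with hg2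
    have hg2adj : ∀ ⦃u v⦄, H.Adj u v → g2 u ≠ g2 v := by
      intro u v huv
      have h1 : C u ≠ C v := C.valid huv
      have : ∀ s t : Fin 2, s ≠ t → ((s : ℕ) : ZMod 2) ≠ ((t : ℕ) : ZMod 2) := by decide
      exact this _ _ h1
    have hpar : ∀ v, g2 v = g2 r + (d v : ZMod 2) := by
      intro v
      obtain ⟨w, hw⟩ := hH.exists_walk_length_eq_dist r v
      simp only [hd]
      rw [← hw]
      exact walk_parity hg2adj w
    have hparadj : ∀ ⦃v1 v2⦄, H.Adj v1 v2 → d v2 = d v1 + 1 ∨ d v1 = d v2 + 1 := by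
      intro v1 v2 h12
      have hne : d v1 ≠ d v2 := by
        intro he
        apply hg2adj h12
        rw [hpar v1, hpar v2, he]
      have l1 : d v2 ≤ d v1 + 1 := adj_dist_le hH h12
      have l2 : d v1 ≤ d v2 + 1 := adj_dist_le hH h12.symm
      omega
    refine ⟨fun v => ⟨if d v % 4 = 1 ∨ d v % 4 = 2 then 1 else 0, by split <;> omega⟩, ?_⟩
    set γ : β → Fin l := fun v => ⟨if d v % 4 = 1 ∨ d v % 4 = 2 then 1 else 0, by split <;> omega⟩
      with hγ
    have hval : ∀ u v : β, γ u = γ v →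
        (if d u % 4 = 1 ∨ d u % 4 = 2 then 1 else 0 : ℕ) =
        (if d v % 4 = 1 ∨ d v % 4 = 2 then 1 else 0 : ℕ) := by
      intro u v huv
      exact congrArg Fin.val huv
    have aux : ∀ v1 v2, H.Adj v1 v2 → (∀ z, H.Adj v1 z → γ z = γ v2) →
        (∀ z, H.Adj v2 z → γ z = γ v1) → d v2 = d v1 + 1 → False := by
      intro v1 v2 h12 e1 e2 hdd
      by_cases h0 : d v1 = 0
      · have hv1r : v1 = r := hzero v1 h0
        obtain ⟨z, hz, hzr⟩ := hroot v2 (hv1r ▸ h12)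
        have hzd : d z ≠ 0 := fun hc => hzr (hzero z hc)
        have hzle : d z ≤ d v2 + 1 := adj_dist_le hH hz
        have := hval z v1 (e2 z hz)
        rw [h0] at this
        have h2 : d v2 = 1 := by omega
        rw [h2] at hzle
        split at this
        · simp at this
        · omega
      · obtain ⟨p, hp, hpd0⟩ := exists_parent hH (r := r) (v := v1) h0
        have hpd : d p + 1 = d v1 := hpd0
        have := hval p v2 (e1 p hp)
        have hdp : d p = d v1 - 1 := by omega
        rw [hdp, hdd] at this
        split at this <;> split at this <;> omega
    intro v1 v2 h12 ⟨h1, h2⟩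
    have e1 : ∀ z, H.Adj v1 z → γ z = γ v2 := by
      intro z hz
      have : γ z ∈ γ '' H.neighborSet v1 := ⟨z, hz, rfl⟩
      rw [h1] at this
      exact this
    have e2 : ∀ z, H.Adj v2 z → γ z = γ v1 := by
      intro z hz
      have : γ z ∈ γ '' H.neighborSet v2 := ⟨z, hz, rfl⟩
      rw [h2] at this
      exact this
    rcases hparadj h12 with hdd | hdd
    · exact aux v1 v2 h12 e1 e2 hdd
    · exact aux v2 v1 h12.symm e2 e1 hdd
  · -- non-bipartite: l ≥ 3, use distance mod 3
    have hl3 : 3 ≤ l := by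
      by_contra hc
      exact hbip (hcol.mono (by omega))
    refine ⟨fun v => ⟨d v % 3, by omega⟩, ?_⟩
    set γ : β → Fin l := fun v => ⟨d v % 3, by omega⟩ with hγ
    have hval : ∀ u v : β, γ u = γ v → d u % 3 = d v % 3 := by
      intro u v huv
      exact congrArg Fin.val huv
    have aux0 : ∀ v1 v2, H.Adj v1 v2 → (∀ z, H.Adj v2 z → γ z = γ v1) →
        d v1 = 0 → False := by
      intro v1 v2 h12 e2 h0
      have hv1r : v1 = r := hzero v1 h0
      obtain ⟨z, hz, hzr⟩ := hroot v2 (hv1r ▸ h12)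
      have hzd : d z ≠ 0 := fun hc => hzr (hzero z hc)
      have hv2d : d v2 ≤ 1 := by
        have h' : d v2 ≤ d v1 + 1 := adj_dist_le hH h12
        omega
      have hzle : d z ≤ d v2 + 1 := adj_dist_le hH hz
      have := hval z v1 (e2 z hz)
      rw [h0] at this
      omega
    intro v1 v2 h12 ⟨h1, h2⟩
    have e1 : ∀ z, H.Adj v1 z → γ z = γ v2 := by
      intro z hz
      have : γ z ∈ γ '' H.neighborSet v1 := ⟨z, hz, rfl⟩
      rw [h1] at this
      exact this
    have e2 : ∀ z, H.Adj v2 z → γ z = γ v1 := by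
      intro z hz
      have : γ z ∈ γ '' H.neighborSet v2 := ⟨z, hz, rfl⟩
      rw [h2] at this
      exact this
    by_cases h01 : d v1 = 0
    · exact aux0 v1 v2 h12 e2 h01
    by_cases h02 : d v2 = 0
    · exact aux0 v2 v1 h12.symm e1 h02
    obtain ⟨p1, hp1, hpd1⟩ := exists_parent hH (r := r) (v := v1) h01
    obtain ⟨p2, hp2, hpd2⟩ := exists_parent hH (r := r) (v := v2) h02
    have hpd1' : d p1 + 1 = d v1 := hpd1
    have hpd2' : d p2 + 1 = d v2 := hpd2
    have c1 := hval p1 v2 (e1 p1 hp1)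
    have c2 := hval p2 v1 (e2 p2 hp2)
    omega

end NWB

section Key

variable {α β : Type*}

private lemma key (G : SimpleGraph α) (H : SimpleGraph β) {k l : ℕ}
    (f : α → Fin k) (hf : ∀ ⦃u v⦄, G.Adj u v → f u ≠ f v)
    (γ : β → Fin l)
    (hγ : ∀ ⦃v1 v2⦄, H.Adj v1 v2 →
      ¬(γ '' H.neighborSet v1 = {γ v2} ∧ γ '' H.neighborSet v2 = {γ v1})) :
    (G.tensorProd H).LidColorable (k * l) := by
  classical
  set c : α × β → Fin k × Fin l := fun x => (f x.1, γ x.2) with hc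
  refine ⟨fun x => finProdFinEquiv (c x), ?_, ?_⟩
  · rintro ⟨u1, v1⟩ ⟨u2, v2⟩ ⟨hGa, hHa⟩ heq
    have : c (u1, v1) = c (u2, v2) := finProdFinEquiv.injective heq
    exact hf hGa (congrArg Prod.fst this)
  · rintro ⟨u1, v1⟩ ⟨u2, v2⟩ ⟨hGa, hHa⟩ hne heq
    have heqc : c '' (G.tensorProd H).closedNbhd (u1, v1)
        = c '' (G.tensorProd H).closedNbhd (u2, v2) := by
      have h2 := congrArg (Set.image (⇑finProdFinEquiv.symm)) heq
      rw [← Set.image_comp, ← Set.image_comp] at h2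
      simpa [Function.comp] using h2
    -- main fiber argument
    have main : ∀ (w1 w2 : α) (x1 x2 : β), G.Adj w1 w2 → H.Adj x1 x2 →
        c '' (G.tensorProd H).closedNbhd (w1, x1)
          = c '' (G.tensorProd H).closedNbhd (w2, x2) →
        γ '' H.neighborSet x2 = {γ x1} := by
      intro w1 w2 x1 x2 hGa hHa heqc
      apply Set.Subset.antisymm
      · rintro b ⟨v', hv', rfl⟩
        have hmem : ((w1 : α), v') ∈ (G.tensorProd H).closedNbhd (w2, x2) := by
          right
          exact ⟨hGa.symm, hv'⟩
        have : c (w1, v') ∈ c '' (G.tensorProd H).closedNbhd (w1, x1) := by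
          rw [heqc]; exact ⟨_, hmem, rfl⟩
        obtain ⟨w, hw, hcw⟩ := this
        rcases hw with rfl | hw
        · have : γ x1 = γ v' := congrArg Prod.snd hcw
          simp [this.symm]
        · exfalso
          have hadj : (G.tensorProd H).Adj (w1, x1) w := hw
          exact hf hadj.1 (congrArg Prod.fst hcw).symm
      · rintro b rfl
        exact ⟨x1, hHa.symm, rfl⟩
    exact hγ hHa ⟨main u2 u1 v2 v1 hGa.symm hHa.symm heqc.symm, main u1 u2 v1 v2 hGa hHa heqc⟩

private lemma key' (G : SimpleGraph α) (H : SimpleGraph β) {k l : ℕ}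
    (g : β → Fin l) (hg : ∀ ⦃u v⦄, H.Adj u v → g u ≠ g v)
    (γ : α → Fin k)
    (hγ : ∀ ⦃v1 v2⦄, G.Adj v1 v2 →
      ¬(γ '' G.neighborSet v1 = {γ v2} ∧ γ '' G.neighborSet v2 = {γ v1})) :
    (G.tensorProd H).LidColorable (k * l) := by
  classical
  set c : α × β → Fin k × Fin l := fun x => (γ x.1, g x.2) with hc
  refine ⟨fun x => finProdFinEquiv (c x), ?_, ?_⟩
  · rintro ⟨u1, v1⟩ ⟨u2, v2⟩ ⟨hGa, hHa⟩ heq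
    have : c (u1, v1) = c (u2, v2) := finProdFinEquiv.injective heq
    exact hg hHa (congrArg Prod.snd this)
  · rintro ⟨u1, v1⟩ ⟨u2, v2⟩ ⟨hGa, hHa⟩ hne heq
    have heqc : c '' (G.tensorProd H).closedNbhd (u1, v1)
        = c '' (G.tensorProd H).closedNbhd (u2, v2) := by
      have h2 := congrArg (Set.image (⇑finProdFinEquiv.symm)) heq
      rw [← Set.image_comp, ← Set.image_comp] at h2
      simpa [Function.comp] using h2
    have main : ∀ (w1 w2 : α) (x1 x2 : β), G.Adj w1 w2 → H.Adj x1 x2 →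
        c '' (G.tensorProd H).closedNbhd (w1, x1)
          = c '' (G.tensorProd H).closedNbhd (w2, x2) →
        γ '' G.neighborSet w2 = {γ w1} := by
      intro w1 w2 x1 x2 hGa hHa heqc
      apply Set.Subset.antisymm
      · rintro b ⟨u', hu', rfl⟩
        have hmem : ((u' : α), x1) ∈ (G.tensorProd H).closedNbhd (w2, x2) := by
          right
          exact ⟨hu', hHa.symm⟩
        have : c (u', x1) ∈ c '' (G.tensorProd H).closedNbhd (w1, x1) := by
          rw [heqc]; exact ⟨_, hmem, rfl⟩
        obtain ⟨w, hw, hcw⟩ := this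
        rcases hw with rfl | hw
        · have : γ w1 = γ u' := congrArg Prod.fst hcw
          simp [this.symm]
        · exfalso
          have hadj : (G.tensorProd H).Adj (w1, x1) w := hw
          exact hg hadj.2 (congrArg Prod.snd hcw).symm
      · rintro b rfl
        exact ⟨w1, hGa.symm, rfl⟩
    exact hγ hGa ⟨main u2 u1 v2 v1 hGa.symm hHa.symm heqc.symm, main u1 u2 v1 v2 hGa hHa heqc⟩

end Key

section MainParts

private lemma exists_edge {V : Type*} [Nontrivial V] {G : SimpleGraph V} (hG : G.Connected) :
    ∃ u v, G.Adj u v := by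
  obtain ⟨a, b, hab⟩ := exists_pair_ne V
  obtain ⟨w⟩ := hG.preconnected a b
  cases w with
  | nil => exact absurd rfl hab
  | cons h _ => exact ⟨_, _, h⟩

private lemma two_le_of_adj {V : Type*} {G : SimpleGraph V} {n : ℕ} (hc : G.Colorable n)
    {u v : V} (h : G.Adj u v) : 2 ≤ n := by
  obtain ⟨C⟩ := hc
  have hne := C.valid h
  by_contra hn
  interval_cases n
  · exact (C u).elim0
  · exact hne (Subsingleton.elim _ _)

private lemma chrom_ne_zero {V : Type*} [Nonempty V] (G : SimpleGraph V) :
    G.chromaticNumber ≠ 0 := by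
  by_cases h : ∃ n, G.Colorable n
  · obtain ⟨n, hn⟩ := h
    exact (SimpleGraph.chromaticNumber_pos hn).ne'
  · rw [← SimpleGraph.chromaticNumber_ne_top_iff_exists, not_ne_iff] at h
    rw [h]
    simp

end MainParts

/-- For connected graphs `G` and `H` with at least two vertices each, one of which has at
least three vertices, `χ_lid(G × H) ≤ χ(G) · χ(H)`. -/
theorem lid_stmt_13 {α β : Type*} [Nontrivial α] [Nontrivial β]
    (G : SimpleGraph α) (H : SimpleGraph β) (hG : G.Connected) (hH : H.Connected)
    (h3 : (∃ a b c : α, a ≠ b ∧ a ≠ c ∧ b ≠ c) ∨ (∃ a b c : β, a ≠ b ∧ a ≠ c ∧ b ≠ c)) :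
    (G.tensorProd H).lidChromaticNumber ≤ G.chromaticNumber * H.chromaticNumber := by
  classical
  by_cases hGt : G.chromaticNumber = ⊤
  · rw [hGt, ENat.top_mul (chrom_ne_zero H)]
    exact le_top
  by_cases hHt : H.chromaticNumber = ⊤
  · rw [hHt, ENat.mul_top (chrom_ne_zero G)]
    exact le_top
  obtain ⟨k, hk⟩ : ∃ k : ℕ, G.chromaticNumber = (k : ℕ∞) := ⟨_, (ENat.coe_toNat hGt).symm⟩
  obtain ⟨l, hl⟩ : ∃ l : ℕ, H.chromaticNumber = (l : ℕ∞) := ⟨_, (ENat.coe_toNat hHt).symm⟩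
  have hcolG : G.Colorable k := by
    rw [← SimpleGraph.chromaticNumber_le_iff_colorable, hk]
  have hcolH : H.Colorable l := by
    rw [← SimpleGraph.chromaticNumber_le_iff_colorable, hl]
  obtain ⟨f⟩ := hcolG.mono le_rfl
  obtain ⟨g⟩ := hcolH.mono le_rfl
  have hlid : (G.tensorProd H).LidColorable (k * l) := by
    rcases h3 with h3a | h3b
    · obtain ⟨u, v, huv⟩ := exists_edge hG
      have hk2 : 2 ≤ k := two_le_of_adj hcolG huv
      obtain ⟨γ, hγ⟩ := exists_nwb G hG h3a hk2 hcolG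
      exact key' G H g (fun u v h => g.valid h) γ hγ
    · obtain ⟨u, v, huv⟩ := exists_edge hH
      have hl2 : 2 ≤ l := two_le_of_adj hcolH huv
      obtain ⟨γ, hγ⟩ := exists_nwb H hH h3b hl2 hcolH
      exact key G H f (fun u v h => f.valid h) γ hγ
  have hle : (G.tensorProd H).lidChromaticNumber ≤ ((k * l : ℕ) : ℕ∞) := by
    exact iInf₂_le (k * l) hlid
  rw [hk, hl, ← Nat.cast_mul]
  exact hle
end
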